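/- arXiv:2406.01890 — 5 statements merged into one kernel-verified Lean document; each statement's English description precedes it below -/
import Mathlib

section
/- Let s ≥ 4 be an integer. Every connected graph G containing no induced K_{1,s} and no induced T_3 satisfies def(G) ≤ s − 2, and every connected graph G containing no induced K_{1,s} and no induced P_4 satisfies def(G) ≤ s − 2. -/
open SimpleGraph

/-- The deficiency of a finite graph: number of vertices missed by a maximum matching,
i.e. `|V(G)| - 2ν(G)`. -/
noncomputable def deficiency {V : Type*} [Fintype V] (G : SimpleGraph V) : ℕ :=
  Fintype.card V - sSup {k : ℕ | ∃ M : G.Subgraph, M.IsMatching ∧ M.verts.ncard = k}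

/-- The star `K_{1,n}`. -/
def starGraph (n : ℕ) : SimpleGraph (Unit ⊕ Fin n) := completeBipartiteGraph Unit (Fin n)

/-- `T n`: the graph obtained by attaching two copies of `P₂` at one end of a path `Pₙ`
(the vertices of the path are `Sum.inl 0, …, Sum.inl (n-1)`; the branch vertex is
`Sum.inl (n-1)` and the end of `T n` is `Sum.inl 0`). -/
def Tgraph (n : ℕ) : SimpleGraph (Fin n ⊕ Fin 2) :=
  SimpleGraph.fromRel (fun a b =>
    match a, b with
    | Sum.inl i, Sum.inl j => (i : ℕ) + 1 = (j : ℕ)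
    | Sum.inl i, Sum.inr _ => (i : ℕ) = n - 1
    | _, _ => False)

/-- The end vertex of (a copy of) `T p`. -/
def isTEnd {p : ℕ} : Fin p ⊕ Fin 2 → Prop
  | Sum.inl i => (i : ℕ) = 0
  | Sum.inr _ => False

/-- `K̃ₙᵖ`: the graph obtained by attaching a copy of `T p` at each vertex of the
complete graph `Kₙ`, identifying each vertex of `Kₙ` with the end of its copy of `T p`. -/
def Ktilde (n p : ℕ) : SimpleGraph (Fin n × (Fin p ⊕ Fin 2)) :=
  SimpleGraph.fromRel (fun a b =>
    (a.1 = b.1 ∧ (Tgraph p).Adj a.2 b.2) ∨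
    (a.1 ≠ b.1 ∧ isTEnd a.2 ∧ isTEnd b.2))

/-- `Fₙ¹`: the path `P_{2n+1}` with a pendant vertex attached at its center. -/
def F1 (n : ℕ) : SimpleGraph (Fin (2 * n + 1) ⊕ Unit) :=
  SimpleGraph.fromRel (fun a b =>
    match a, b with
    | Sum.inl i, Sum.inl j => (i : ℕ) + 1 = (j : ℕ)
    | Sum.inl i, Sum.inr _ => (i : ℕ) = n
    | _, _ => False)

/-- `Fₙ²`: the triangle `K₃` with a copy of `Pₙ` attached at each vertex
(the triangle vertices are `(i, 0)`). -/
def F2 (n : ℕ) : SimpleGraph (Fin 3 × Fin n) :=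
  SimpleGraph.fromRel (fun a b =>
    (a.1 = b.1 ∧ (a.2 : ℕ) + 1 = (b.2 : ℕ)) ∨
    (a.1 ≠ b.1 ∧ (a.2 : ℕ) = 0 ∧ (b.2 : ℕ) = 0))

/-- `Fₙ³`: the cycle `C₄` with a copy of `Pₙ` attached at each of two nonadjacent
vertices. The two paths are `(k, 0), …, (k, n-1)` for `k : Fin 2`; the two other cycle
vertices are `Sum.inr 0` and `Sum.inr 1`, each adjacent to `(0,0)` and `(1,0)`. -/
def F3 (n : ℕ) : SimpleGraph ((Fin 2 × Fin n) ⊕ Fin 2) :=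
  SimpleGraph.fromRel (fun a b =>
    match a, b with
    | Sum.inl (k, i), Sum.inl (k', i') => k = k' ∧ (i : ℕ) + 1 = (i' : ℕ)
    | Sum.inl (_, i), Sum.inr _ => (i : ℕ) = 0
    | _, _ => False)

/-- `Fₙ⁴`: `Fₙ³` together with the edge joining its two vertices of degree 3. -/
def F4 (n : ℕ) : SimpleGraph ((Fin 2 × Fin n) ⊕ Fin 2) :=
  SimpleGraph.fromRel (fun a b =>
    match a, b with
    | Sum.inl (k, i), Sum.inl (k', i') =>
        (k = k' ∧ (i : ℕ) + 1 = (i' : ℕ)) ∨ (k ≠ k' ∧ (i : ℕ) = 0 ∧ (i' : ℕ) = 0)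
    | Sum.inl (_, i), Sum.inr _ => (i : ℕ) = 0
    | _, _ => False)

/-- `F̃ₙᵖ`: the triangle `K₃` with a copy of `T p` attached (by its end) at one vertex and
a copy of `Pₙ` attached at each of the other two vertices. -/
def Ftilde (n p : ℕ) : SimpleGraph ((Fin p ⊕ Fin 2) ⊕ (Fin 2 × Fin n)) :=
  SimpleGraph.fromRel (fun a b =>
    match a, b with
    | Sum.inl x, Sum.inl y => (Tgraph p).Adj x y
    | Sum.inl x, Sum.inr (_, i) => isTEnd x ∧ (i : ℕ) = 0
    | Sum.inr (k, i), Sum.inr (k', i') =>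
        (k = k' ∧ (i : ℕ) + 1 = (i' : ℕ)) ∨ (k ≠ k' ∧ (i : ℕ) = 0 ∧ (i' : ℕ) = 0)
    | _, _ => False)

/-- `Bᵢ`: the graph obtained by attaching two copies of `P₂` at the end of `T_{i+2}`. -/
def Bgraph (i : ℕ) : SimpleGraph ((Fin (i + 2) ⊕ Fin 2) ⊕ Fin 2) :=
  SimpleGraph.fromRel (fun a b =>
    match a, b with
    | Sum.inl x, Sum.inl y => (Tgraph (i + 2)).Adj x y
    | Sum.inl x, Sum.inr _ => isTEnd x
    | _, _ => False)

/-- `H¹_{s,t}`: the union of `s+1` disjoint paths `Qᵢ` on `t` vertices (vertices `(i, j)`)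
together with new vertices `vᵢ = (i, 0)` and `wᵢ = (i, 1)` (for `i : Fin s`) and the edges
`vᵢwᵢ`, `vᵢ uᵢᵗ`, `vᵢ u_{i+1}¹`. -/
def H1graph (s t : ℕ) : SimpleGraph ((Fin (s + 1) × Fin t) ⊕ (Fin s × Fin 2)) :=
  SimpleGraph.fromRel (fun a b =>
    match a, b with
    | Sum.inl (i, j), Sum.inl (i', j') => i = i' ∧ (j : ℕ) + 1 = (j' : ℕ)
    | Sum.inl (i, j), Sum.inr (k, l) =>
        (l : ℕ) = 0 ∧ (((i : ℕ) = (k : ℕ) ∧ (j : ℕ) = t - 1) ∨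
          ((i : ℕ) = (k : ℕ) + 1 ∧ (j : ℕ) = 0))
    | Sum.inr (k, l), Sum.inr (k', l') => k = k' ∧ l ≠ l'
    | _, _ => False)

/-- `H³_{s,t}`: the union of `s+1` disjoint paths `Qᵢ` on `t` vertices together with new
vertices `vᵢ, wᵢ` (`i : Fin s`), `x = Sum.inr (Sum.inr 0)`, `y = Sum.inr (Sum.inr 1)`, and
the edges `x u₁¹`, `u_{s+1}ᵗ y`, and `vᵢ uᵢᵗ`, `vᵢ u_{i+1}¹`, `wᵢ uᵢᵗ`, `wᵢ u_{i+1}¹`. -/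
def H3graph (s t : ℕ) :
    SimpleGraph ((Fin (s + 1) × Fin t) ⊕ ((Fin s × Fin 2) ⊕ Fin 2)) :=
  SimpleGraph.fromRel (fun a b =>
    match a, b with
    | Sum.inl (i, j), Sum.inl (i', j') => i = i' ∧ (j : ℕ) + 1 = (j' : ℕ)
    | Sum.inl (i, j), Sum.inr (Sum.inl (k, _)) =>
        ((i : ℕ) = (k : ℕ) ∧ (j : ℕ) = t - 1) ∨ ((i : ℕ) = (k : ℕ) + 1 ∧ (j : ℕ) = 0)
    | Sum.inl (i, j), Sum.inr (Sum.inr m) =>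
        ((m : ℕ) = 0 ∧ (i : ℕ) = 0 ∧ (j : ℕ) = 0) ∨
          ((m : ℕ) = 1 ∧ (i : ℕ) = s ∧ (j : ℕ) = t - 1)
    | _, _ => False)

/-- `H⁴_{s,t}`: `H³_{s,t}` together with the edges `uᵢᵗ u_{i+1}¹` for `i ∈ [s]`. -/
def H4graph (s t : ℕ) :
    SimpleGraph ((Fin (s + 1) × Fin t) ⊕ ((Fin s × Fin 2) ⊕ Fin 2)) :=
  SimpleGraph.fromRel (fun a b =>
    match a, b with
    | Sum.inl (i, j), Sum.inl (i', j') =>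
        (i = i' ∧ (j : ℕ) + 1 = (j' : ℕ)) ∨
          ((i : ℕ) + 1 = (i' : ℕ) ∧ (j : ℕ) = t - 1 ∧ (j' : ℕ) = 0)
    | Sum.inl (i, j), Sum.inr (Sum.inl (k, _)) =>
        ((i : ℕ) = (k : ℕ) ∧ (j : ℕ) = t - 1) ∨ ((i : ℕ) = (k : ℕ) + 1 ∧ (j : ℕ) = 0)
    | Sum.inl (i, j), Sum.inr (Sum.inr m) =>
        ((m : ℕ) = 0 ∧ (i : ℕ) = 0 ∧ (j : ℕ) = 0) ∨
          ((m : ℕ) = 1 ∧ (i : ℕ) = s ∧ (j : ℕ) = t - 1)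
    | _, _ => False)

/-- `H̃ᵖ_{s,t}`: the union of `s+1` disjoint paths `Qᵢ` on `t` vertices and `s` disjoint
copies `Rᵢ` of `T p` with ends `vᵢ = (i, end)`, together with the edges
`uᵢᵗ u_{i+1}¹`, `uᵢᵗ vᵢ`, `u_{i+1}¹ vᵢ` for `i ∈ [s]`. -/
def Htilde (s t p : ℕ) :
    SimpleGraph ((Fin (s + 1) × Fin t) ⊕ (Fin s × (Fin p ⊕ Fin 2))) :=
  SimpleGraph.fromRel (fun a b =>
    match a, b with
    | Sum.inl (i, j), Sum.inl (i', j') =>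
        (i = i' ∧ (j : ℕ) + 1 = (j' : ℕ)) ∨
          ((i : ℕ) + 1 = (i' : ℕ) ∧ (j : ℕ) = t - 1 ∧ (j' : ℕ) = 0)
    | Sum.inl (i, j), Sum.inr (k, x) =>
        isTEnd x ∧ (((i : ℕ) = (k : ℕ) ∧ (j : ℕ) = t - 1) ∨
          ((i : ℕ) = (k : ℕ) + 1 ∧ (j : ℕ) = 0))
    | Sum.inr (k, x), Sum.inr (k', y) => k = k' ∧ (Tgraph p).Adj x y
    | _, _ => False)

/-- A finite graph, encoded as a simple graph on some `Fin n`. -/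
abbrev GraphFam := Set (Σ n : ℕ, SimpleGraph (Fin n))

/-- `Below 𝓗 G` means that some member of the family `𝓗` is (isomorphic to) an induced
subgraph of `G`; so `𝓗 ≤ 𝓗₂` iff `Below 𝓗 G` holds for every `G ∈ 𝓗₂`. -/
def Below (𝓗 : GraphFam) {W : Type*} (G : SimpleGraph W) : Prop :=
  ∃ H ∈ 𝓗, Nonempty (H.2 ↪g G)

/-- The relation `𝓗₁ ≤ 𝓗₂` between families of graphs: every member of `𝓗₂` contains an
induced subgraph isomorphic to some member of `𝓗₁`. -/
def FamLE (𝓗₁ 𝓗₂ : GraphFam) : Prop :=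
  ∀ H ∈ 𝓗₂, Below 𝓗₁ H.2

/-- The induced matching number `ν'(G)`. -/
noncomputable def indMatchNum {V : Type*} [Fintype V] (G : SimpleGraph V) : ℕ :=
  sSup {k : ℕ | ∃ M : G.Subgraph, M.IsInduced ∧ M.IsMatching ∧ M.verts.ncard = 2 * k}

section AuxProof


section Infra
variable {V : Type} [Fintype V] {G : SimpleGraph V} {M N : G.Subgraph}

lemma aux_induce_matching (hM : M.IsMatching) (S : Set V)
    (hcl : ∀ ⦃x y⦄, M.Adj x y → x ∈ S → y ∈ S) :
    (M.induce (M.verts \ S)).IsMatching := by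
  intro v hv
  obtain ⟨w, hw, hu⟩ := hM hv.1
  refine ⟨w, ⟨hv, ⟨M.edge_vert hw.symm, fun hwS => hv.2 (hcl hw.symm hwS)⟩, hw⟩, ?_⟩
  rintro y ⟨-, -, hy⟩; exact hu y hy

lemma aux_surgery (hM : M.IsMatching) (hN : N.IsMatching) (S : Set V) (hNS : N.verts ⊆ S)
    (hcl : ∀ ⦃x y⦄, M.Adj x y → x ∈ S → y ∈ S) :
    ∃ M' : G.Subgraph, M'.IsMatching ∧ M'.verts = (M.verts \ S) ∪ N.verts := by
  refine ⟨(M.induce (M.verts \ S)) ⊔ N, ?_, by simp⟩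
  refine Subgraph.IsMatching.sup (aux_induce_matching hM S hcl) hN ?_
  refine Set.disjoint_of_subset (Subgraph.support_subset_verts _)
    (Subgraph.support_subset_verts _) ?_
  simp only [Subgraph.induce_verts]
  exact Set.disjoint_of_subset_right hNS Set.disjoint_sdiff_left
end Infra

section Infra2
set_option linter.unusedSectionVars false
variable {V : Type} [Fintype V] {G : SimpleGraph V} {M N : G.Subgraph}

/-- If `N` is a matching whose vertex set is closed under `M`-partners and contains a vertex
not covered by `M`, then `M` is not maximum. -/
lemma aux_augment (hM : M.IsMatching)
    (hmax : ∀ N' : G.Subgraph, N'.IsMatching → N'.verts.ncard ≤ M.verts.ncard)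
    (hN : N.IsMatching)
    (hcl : ∀ ⦃x y⦄, M.Adj x y → x ∈ N.verts → y ∈ N.verts)
    (u : V) (huN : u ∈ N.verts) (huM : u ∉ M.verts) : False := by
  obtain ⟨M', hM', hverts⟩ := aux_surgery hM hN N.verts le_rfl hcl
  have heq : M.verts \ N.verts = M.verts \ (M.verts ∩ N.verts) := by
    ext v; simp only [Set.mem_diff, Set.mem_inter_iff]; tauto
  have h1 : (M.verts \ N.verts).ncard + (M.verts ∩ N.verts).ncard = M.verts.ncard := by
    rw [heq]; exact Set.ncard_diff_add_ncard_of_subset Set.inter_subset_left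
  have h2 : (M.verts ∩ N.verts).ncard < N.verts.ncard := by
    apply Set.ncard_lt_ncard _ (Set.toFinite _)
    constructor
    · exact Set.inter_subset_right
    · intro hsub
      exact huM (hsub huN).1
  have h3 : M'.verts.ncard = (M.verts \ N.verts).ncard + N.verts.ncard := by
    rw [hverts, Set.ncard_union_eq _ (Set.toFinite _) (Set.toFinite _)]
    exact Set.disjoint_sdiff_left
  have := hmax M' hM'
  omega

/-- Rotation: move the "hole" from `u` to `y`. -/
lemma aux_rotate (hM : M.IsMatching) (x y u : V) (hxy : M.Adj x y)
    (huM : u ∉ M.verts) (hux : G.Adj u x) :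
    ∃ M' : G.Subgraph, M'.IsMatching ∧ M'.verts = insert u (M.verts \ {y}) := by
  have hxv : x ∈ M.verts := M.edge_vert hxy
  have hyv : y ∈ M.verts := M.edge_vert hxy.symm
  have hxyne : x ≠ y := hxy.ne
  have hux' : u ≠ x := fun h => huM (h ▸ hxv)
  have huy : u ≠ y := fun h => huM (h ▸ hyv)
  obtain ⟨M', hM', hverts⟩ := aux_surgery hM
    (Subgraph.IsMatching.subgraphOfAdj hux) ({u, x, y} : Set V)
    (by simp [Set.insert_subset_iff])
    (by
      intro p q hpq hp
      have hpv := M.edge_vert hpq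
      simp only [Set.mem_insert_iff, Set.mem_singleton_iff] at hp ⊢
      rcases hp with rfl | rfl | rfl
      · exact absurd hpv huM
      · right; right
        obtain ⟨w, hw, huq⟩ := hM hpv
        rw [huq q hpq, ← huq y hxy]
      · right; left
        obtain ⟨w, hw, huq⟩ := hM hyv
        rw [huq q hpq, ← huq x hxy.symm])
  refine ⟨M', hM', ?_⟩
  rw [hverts]
  simp only [subgraphOfAdj_verts]
  ext v
  simp only [Set.mem_union, Set.mem_diff, Set.mem_insert_iff, Set.mem_singleton_iff]
  constructor
  · rintro (⟨hv, hn⟩ | rfl | rfl)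
    · push_neg at hn
      exact Or.inr ⟨hv, hn.2.2⟩
    · exact Or.inl rfl
    · exact Or.inr ⟨hxv, hxyne⟩
  · rintro (rfl | ⟨hv, hvy⟩)
    · exact Or.inr (Or.inl rfl)
    · by_cases hvu : v = u
      · exact Or.inr (Or.inl hvu)
      · by_cases hvx : v = x
        · exact Or.inr (Or.inr hvx)
        · exact Or.inl ⟨hv, by push_neg; exact ⟨hvu, hvx, hvy⟩⟩
end Infra2

section Infra3
set_option linter.unusedSectionVars false
variable {V : Type} [Fintype V] {G : SimpleGraph V} {M : G.Subgraph}

lemma support_sub_pair {u v : V} (h : G.Adj u v) :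
    (G.subgraphOfAdj h).support ⊆ {u, v} := by
  refine (Subgraph.support_subset_verts _).trans ?_
  simp

/-- E1 : two exposed vertices are non-adjacent. -/
lemma exposed_not_adj (hM : M.IsMatching)
    (hmax : ∀ N' : G.Subgraph, N'.IsMatching → N'.verts.ncard ≤ M.verts.ncard)
    {u v : V} (hu : u ∉ M.verts) (hv : v ∉ M.verts) (huv : G.Adj u v) : False := by
  refine aux_augment hM hmax (Subgraph.IsMatching.subgraphOfAdj huv) ?_ u (by simp) hu
  intro x y hxy hx
  exact absurd (M.edge_vert hxy) (by simp at hx; rcases hx with rfl | rfl <;> assumption)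

/-- E3 : no augmenting path u - a - a' - u'. -/
lemma no_aug3 (hM : M.IsMatching)
    (hmax : ∀ N' : G.Subgraph, N'.IsMatching → N'.verts.ncard ≤ M.verts.ncard)
    {u u' a a' : V} (hu : u ∉ M.verts) (hu' : u' ∉ M.verts) (hne : u ≠ u')
    (haa' : M.Adj a a') (h1 : G.Adj u a) (h2 : G.Adj a' u') : False := by
  have hav : a ∈ M.verts := M.edge_vert haa'
  have ha'v : a' ∈ M.verts := M.edge_vert haa'.symm
  have haa : a ≠ a' := (M.adj_sub haa').ne
  have h3 : u ≠ a' := fun h => hu (h ▸ ha'v)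
  have h4 : u' ≠ a := fun h => hu' (h ▸ hav)
  have h5 : u ≠ a := fun h => hu (h ▸ hav)
  have h6 : u' ≠ a' := fun h => hu' (h ▸ ha'v)
  have hN : ((G.subgraphOfAdj h1) ⊔ (G.subgraphOfAdj h2)).IsMatching := by
    refine Subgraph.IsMatching.sup (Subgraph.IsMatching.subgraphOfAdj h1)
      (Subgraph.IsMatching.subgraphOfAdj h2) ?_
    refine Set.disjoint_of_subset (support_sub_pair h1) (support_sub_pair h2) ?_
    refine Set.disjoint_left.mpr ?_
    intro z hz hz'
    simp only [Set.mem_insert_iff, Set.mem_singleton_iff] at hz hz'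
    rcases hz with rfl | rfl <;> rcases hz' with rfl | rfl <;> simp_all
  refine aux_augment hM hmax hN ?_ u (by simp) hu
  intro x y hxy hx
  have hxv := M.edge_vert hxy
  simp only [Subgraph.verts_sup, subgraphOfAdj_verts, Set.mem_union, Set.mem_insert_iff,
    Set.mem_singleton_iff] at hx ⊢
  rcases hx with (rfl | rfl) | (rfl | rfl)
  · exact absurd hxv hu
  · obtain ⟨w, hw, huq⟩ := hM hxv
    rw [huq y hxy, ← huq a' haa']
    simp
  · obtain ⟨w, hw, huq⟩ := hM ha'v
    rw [huq y hxy, ← huq a haa'.symm]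
    simp
  · exact absurd hxv hu'

/-- E5 : no augmenting path u - a - a' - b - b' - u'. -/
lemma no_aug5 (hM : M.IsMatching)
    (hmax : ∀ N' : G.Subgraph, N'.IsMatching → N'.verts.ncard ≤ M.verts.ncard)
    {u u' a a' b b' : V} (hu : u ∉ M.verts) (hu' : u' ∉ M.verts) (hne : u ≠ u')
    (haa' : M.Adj a a') (hbb' : M.Adj b b')
    (hab : a ≠ b) (hab' : a ≠ b') (ha'b : a' ≠ b) (ha'b' : a' ≠ b')
    (h1 : G.Adj u a) (h2 : G.Adj a' b) (h3 : G.Adj b' u') : False := by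
  have hav : a ∈ M.verts := M.edge_vert haa'
  have ha'v : a' ∈ M.verts := M.edge_vert haa'.symm
  have hbv : b ∈ M.verts := M.edge_vert hbb'
  have hb'v : b' ∈ M.verts := M.edge_vert hbb'.symm
  have haa : a ≠ a' := (M.adj_sub haa').ne
  have hbb : b ≠ b' := (M.adj_sub hbb').ne
  have hua : u ≠ a := fun h => hu (h ▸ hav)
  have hua' : u ≠ a' := fun h => hu (h ▸ ha'v)
  have hub : u ≠ b := fun h => hu (h ▸ hbv)
  have hub' : u ≠ b' := fun h => hu (h ▸ hb'v)
  have hu'a : u' ≠ a := fun h => hu' (h ▸ hav)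
  have hu'a' : u' ≠ a' := fun h => hu' (h ▸ ha'v)
  have hu'b : u' ≠ b := fun h => hu' (h ▸ hbv)
  have hu'b' : u' ≠ b' := fun h => hu' (h ▸ hb'v)
  have hN : ((G.subgraphOfAdj h1) ⊔ ((G.subgraphOfAdj h2) ⊔ (G.subgraphOfAdj h3))).IsMatching := by
    refine Subgraph.IsMatching.sup (Subgraph.IsMatching.subgraphOfAdj h1) ?_ ?_
    · refine Subgraph.IsMatching.sup (Subgraph.IsMatching.subgraphOfAdj h2)
        (Subgraph.IsMatching.subgraphOfAdj h3) ?_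
      refine Set.disjoint_of_subset (support_sub_pair h2) (support_sub_pair h3) ?_
      refine Set.disjoint_left.mpr ?_
      intro z hz hz'
      simp only [Set.mem_insert_iff, Set.mem_singleton_iff] at hz hz'
      rcases hz with rfl | rfl <;> rcases hz' with rfl | rfl <;> simp_all
    · have hsub : ((G.subgraphOfAdj h2) ⊔ (G.subgraphOfAdj h3)).support ⊆
          (({a', b} : Set V) ∪ ({b', u'} : Set V)) :=
        (Subgraph.support_subset_verts _).trans (by simp)
      refine Set.disjoint_of_subset (support_sub_pair h1) hsub ?_
      refine Set.disjoint_left.mpr ?_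
      intro z hz hz'
      simp only [Set.mem_insert_iff, Set.mem_union, Set.mem_singleton_iff] at hz hz'
      rcases hz with rfl | rfl <;> rcases hz' with (rfl | rfl) | (rfl | rfl) <;> simp_all
  refine aux_augment hM hmax hN ?_ u (by simp) hu
  intro x y hxy hx
  have hxv := M.edge_vert hxy
  simp only [Subgraph.verts_sup, subgraphOfAdj_verts, Set.mem_union, Set.mem_insert_iff,
    Set.mem_singleton_iff] at hx ⊢
  rcases hx with (rfl | rfl) | (rfl | rfl) | (rfl | rfl)
  · exact absurd hxv hu
  · obtain ⟨w, hw, huq⟩ := hM hxv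
    rw [huq y hxy, ← huq a' haa']; simp
  · obtain ⟨w, hw, huq⟩ := hM ha'v
    rw [huq y hxy, ← huq a haa'.symm]; simp
  · obtain ⟨w, hw, huq⟩ := hM hbv
    rw [huq y hxy, ← huq b' hbb']; simp
  · obtain ⟨w, hw, huq⟩ := hM hb'v
    rw [huq y hxy, ← huq b hbb'.symm]; simp
  · exact absurd hxv hu'
end Infra3

section Dist
set_option linter.unusedSectionVars false
variable {V : Type} [Fintype V] {G : SimpleGraph V}

lemma dist_step (hconn : G.Connected) {u a : V} {r : ℕ} (h : G.dist u a = r + 1) :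
    ∃ z, G.Adj u z ∧ G.dist z a = r := by
  obtain ⟨p, hp⟩ := hconn.exists_walk_length_eq_dist u a
  cases p with
  | nil => simp at h
  | cons hadj q =>
    rename_i z
    refine ⟨z, hadj, le_antisymm ?_ ?_⟩
    · have := dist_le q
      simp only [Walk.length_cons] at hp
      omega
    · have h2 : G.dist u a ≤ G.dist u z + G.dist z a := hconn.dist_triangle
      have h3 : G.dist u z ≤ 1 := by
        have := dist_le hadj.toWalk
        simpa using this
      omega

lemma not_adj_of_dist_gap (hconn : G.Connected) {x y a : V}
    (h : G.dist y a + 2 ≤ G.dist x a) : ¬ G.Adj x y := by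
  intro hadj
  have h2 : G.dist x a ≤ G.dist x y + G.dist y a := hconn.dist_triangle
  have h3 : G.dist x y ≤ 1 := by simpa using dist_le hadj.toWalk
  omega

lemma dist_le_card (hconn : G.Connected) (u v : V) :
    G.dist u v ≤ Fintype.card V - 1 := by
  obtain ⟨p, hp⟩ := hconn.exists_walk_length_eq_dist u v
  have hpath : p.IsPath := p.isPath_of_length_eq_dist hp
  have := hpath.length_lt
  omega
end Dist

section Builders
set_option linter.unusedSectionVars false
variable {V : Type} [Fintype V] {G : SimpleGraph V}

lemma chair_builder (c p1 p2 q1 q2 : V)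
    (a1 : G.Adj c p1) (a2 : G.Adj c p2) (a3 : G.Adj c q1) (a4 : G.Adj q1 q2)
    (n1 : ¬G.Adj p1 p2) (n2 : ¬G.Adj p1 q1) (n3 : ¬G.Adj p1 q2)
    (n4 : ¬G.Adj p2 q1) (n5 : ¬G.Adj p2 q2) (n6 : ¬G.Adj c q2)
    (d1 : p1 ≠ p2) (d2 : p1 ≠ q1) (d3 : p2 ≠ q1)
    (d4 : c ≠ q2) (d5 : p1 ≠ q2) (d6 : p2 ≠ q2) :
    Nonempty (Tgraph 3 ↪g G) := by
  have e1 : c ≠ p1 := a1.ne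
  have e2 : c ≠ p2 := a2.ne
  have e3 : c ≠ q1 := a3.ne
  have e4 : q1 ≠ q2 := a4.ne
  refine ⟨⟨⟨Sum.elim ![q2, q1, c] ![p1, p2], ?_⟩, ?_⟩⟩
  · intro x y hxy
    rcases x with i | i <;> rcases y with j | j <;> fin_cases i <;> fin_cases j <;>
      simp_all <;> tauto
  · intro x y
    change G.Adj (Sum.elim ![q2, q1, c] ![p1, p2] x) (Sum.elim ![q2, q1, c] ![p1, p2] y) ↔ _
    rcases x with i | i <;> rcases y with j | j <;> fin_cases i <;> fin_cases j <;>
      simp [Tgraph, fromRel_adj] <;>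
      first
        | exact a4.symm | exact a4 | exact a3.symm | exact a3
        | exact a1 | exact a2 | exact a1.symm | exact a2.symm
        | simp_all [G.adj_comm]
        | skip
end Builders

section Builders2
set_option linter.unusedSectionVars false
variable {V : Type} [Fintype V] {G : SimpleGraph V}

lemma star_builder {s : ℕ} (c : V) (f : Fin s → V) (hinj : Function.Injective f)
    (hadj : ∀ i, G.Adj c (f i)) (hind : ∀ i j, i ≠ j → ¬ G.Adj (f i) (f j)) :
    Nonempty (_root_.starGraph s ↪g G) := by
  refine ⟨⟨⟨Sum.elim (fun _ => c) f, ?_⟩, ?_⟩⟩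
  · intro x y hxy
    rcases x with i | i <;> rcases y with j | j
    · cases i; cases j; rfl
    · exact absurd (hxy : c = f j) (hadj j).ne
    · exact absurd (hxy : f i = c) (hadj i).ne.symm
    · exact congrArg Sum.inr (hinj hxy)
  · intro x y
    change G.Adj (Sum.elim (fun _ => c) f x) (Sum.elim (fun _ => c) f y) ↔ _
    rcases x with i | i <;> rcases y with j | j <;>
      simp [_root_.starGraph, completeBipartiteGraph] <;>
      first
        | exact G.irrefl
        | exact hadj j
        | exact (hadj i).symm
        | · intro h
            rcases eq_or_ne i j with rfl | hne
            · exact G.irrefl h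
            · exact hind i j (fun hc => hne hc) h
end Builders2

lemma p4_in_chair : Nonempty (pathGraph 4 ↪g Tgraph 3) := by
  refine ⟨⟨⟨![Sum.inl 0, Sum.inl 1, Sum.inl 2, Sum.inr 0], ?_⟩, ?_⟩⟩
  · intro x y hxy
    fin_cases x <;> fin_cases y <;> simp_all
  · intro x y
    change (Tgraph 3).Adj (![Sum.inl 0, Sum.inl 1, Sum.inl 2, Sum.inr 0] x)
      (![Sum.inl 0, Sum.inl 1, Sum.inl 2, Sum.inr 0] y) ↔ _
    fin_cases x <;> fin_cases y <;>
      simp [Tgraph, fromRel_adj, pathGraph_adj, Fin.ext_iff] <;> decide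

lemma chairfree_of_p4free {V : Type} {G : SimpleGraph V}
    (h : ¬ Nonempty (pathGraph 4 ↪g G)) : ¬ Nonempty (Tgraph 3 ↪g G) := by
  rintro ⟨e⟩
  obtain ⟨e2⟩ := p4_in_chair
  exact h ⟨e.comp e2⟩

section MaxM
set_option linter.unusedSectionVars false
variable {V : Type} [Fintype V] {G : SimpleGraph V}

/-- maximum matchings -/
def IsMaxMatching (G : SimpleGraph V) (M : G.Subgraph) : Prop :=
  M.IsMatching ∧ ∀ N : G.Subgraph, N.IsMatching → N.verts.ncard ≤ M.verts.ncard

lemma matchset_nonempty (G : SimpleGraph V) :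
    {k | ∃ M : G.Subgraph, M.IsMatching ∧ M.verts.ncard = k}.Nonempty := by
  refine ⟨0, ⊥, ?_, by simp⟩
  intro v hv
  simp only [Subgraph.verts_bot, Set.mem_empty_iff_false] at hv

lemma matchset_bdd (G : SimpleGraph V) :
    BddAbove {k | ∃ M : G.Subgraph, M.IsMatching ∧ M.verts.ncard = k} := by
  refine ⟨Fintype.card V, ?_⟩
  rintro k ⟨M, -, rfl⟩
  have := Set.ncard_le_ncard (Set.subset_univ M.verts) (Set.toFinite _)
  simpa [Set.ncard_univ] using this

lemma exists_maxmatching (G : SimpleGraph V) : ∃ M, IsMaxMatching G M := by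
  obtain ⟨M, hM, hcard⟩ := Nat.sSup_mem (matchset_nonempty G) (matchset_bdd G)
  refine ⟨M, hM, fun N hN => ?_⟩
  rw [hcard]
  exact le_csSup (matchset_bdd G) ⟨N, hN, rfl⟩

lemma maxmatching_card (M : G.Subgraph) (h : IsMaxMatching G M) :
    M.verts.ncard = sSup {k | ∃ M' : G.Subgraph, M'.IsMatching ∧ M'.verts.ncard = k} := by
  refine le_antisymm (le_csSup (matchset_bdd G) ⟨M, h.1, rfl⟩) ?_
  obtain ⟨M', hM', hcard⟩ := Nat.sSup_mem (matchset_nonempty G) (matchset_bdd G)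
  rw [← hcard]
  exact h.2 M' hM'

lemma compl_ncard_eq (s : Set V) : (sᶜ).ncard = Fintype.card V - s.ncard := by
  have h := Set.ncard_add_ncard_compl s
  rw [Nat.card_eq_fintype_card] at h
  omega

end MaxM

section MaxM2
set_option linter.unusedSectionVars false
variable {V : Type} [Fintype V] {G : SimpleGraph V}

/-- Rotation preserving maximality: exposes `y` instead of `u`. -/
lemma rotate_max {M : G.Subgraph} (h : IsMaxMatching G M) {x y u : V} (hxy : M.Adj x y)
    (huM : u ∉ M.verts) (hux : G.Adj u x) :
    ∃ M2, IsMaxMatching G M2 ∧ M2.verts = insert u (M.verts \ {y}) := by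
  obtain ⟨M2, hM2, hverts⟩ := aux_rotate h.1 x y u hxy huM hux
  have hyv : y ∈ M.verts := M.edge_vert hxy.symm
  have huy : u ≠ y := fun hh => huM (hh ▸ hyv)
  have hcard : M2.verts.ncard = M.verts.ncard := by
    rw [hverts, Set.ncard_insert_of_notMem (by simp [huy, huM]) (Set.toFinite _),
      Set.ncard_diff_singleton_of_mem hyv]
    have : 0 < M.verts.ncard := (Set.nonempty_of_mem hyv).ncard_pos (Set.toFinite _)
    omega
  exact ⟨M2, ⟨hM2, fun N hN => hcard ▸ h.2 N hN⟩, hverts⟩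

/-- exposed neighbours of `a`. -/
def ANb (G : SimpleGraph V) (M : G.Subgraph) (a : V) : Set V :=
  {u | u ∉ M.verts ∧ G.Adj a u}

open Classical in
/-- The potential function. -/
noncomputable def Phi (G : SimpleGraph V) (M : G.Subgraph) (a : V) : ℕ :=
  (Fintype.card V * Fintype.card V + 1) * (Fintype.card V - (ANb G M a).ncard) +
    ∑ u ∈ Finset.univ.filter (fun u => u ∉ M.verts), G.dist u a

lemma sum_dist_le (hconn : G.Connected) (a : V) (s : Finset V) :
    ∑ u ∈ s, G.dist u a ≤ Fintype.card V * Fintype.card V := by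
  calc ∑ u ∈ s, G.dist u a ≤ s.card * (Fintype.card V - 1) := by
        apply Finset.sum_le_card_nsmul
        intro u _
        exact dist_le_card hconn u a
    _ ≤ Fintype.card V * Fintype.card V :=
        Nat.mul_le_mul (Finset.card_le_univ s) (Nat.sub_le _ _)

lemma anb_ncard_lt {M : G.Subgraph} {a : V} (ha : a ∈ M.verts) :
    (ANb G M a).ncard < Fintype.card V := by
  have hss : ANb G M a ⊂ Set.univ := by
    refine ⟨Set.subset_univ _, fun hsub => ?_⟩
    exact (hsub (Set.mem_univ a)).1 ha
  have := Set.ncard_lt_ncard hss (Set.toFinite _)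
  simpa [Set.ncard_univ] using this

/-- Strictly more exposed neighbours somewhere means strictly smaller potential. -/
lemma phi_bigger (hconn : G.Connected) {M M' : G.Subgraph} {a a' : V}
    (hmn : (ANb G M a).ncard < Fintype.card V)
    (h : (ANb G M a).ncard < (ANb G M' a').ncard) : Phi G M' a' < Phi G M a := by
  classical
  set n := Fintype.card V
  set K := n * n + 1
  set m := (ANb G M a).ncard
  have h1 : n - (ANb G M' a').ncard ≤ n - m - 1 := by omega
  have h2 : Phi G M' a' ≤ K * (n - m - 1) + n * n := by
    refine Nat.add_le_add (Nat.mul_le_mul_left _ h1) ?_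
    exact sum_dist_le hconn a' _
  obtain ⟨t, ht⟩ : ∃ t, n - m = t + 1 := ⟨n - m - 1, by omega⟩
  have h3 : K * (n - m) = K * (n - m - 1) + K := by
    rw [ht, Nat.mul_add, Nat.mul_one, Nat.add_sub_cancel]
  have h4 : Phi G M a ≥ K * (n - m) := Nat.le_add_right _ _
  omega

end MaxM2

section MaxM3
set_option linter.unusedSectionVars false
variable {V : Type} [Fintype V] {G : SimpleGraph V}

/-- Moving the hole closer to `a` (while not losing exposed neighbours of `a`)
decreases the potential. -/
lemma phi_swap {M M2 : G.Subgraph} {a us y : V}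
    (hM2v : M2.verts = insert us (M.verts \ {y}))
    (hus : us ∉ M.verts) (hy : y ∈ M.verts) (hna : ¬ G.Adj a us)
    (hdy : G.dist y a < G.dist us a) : Phi G M2 a < Phi G M a := by
  classical
  have hyus : y ≠ us := fun h => hus (h ▸ hy)
  have hsub : ANb G M a ⊆ ANb G M2 a := by
    rintro u ⟨huM, hadj⟩
    have huus : u ≠ us := fun h => hna (h ▸ hadj)
    refine ⟨?_, hadj⟩
    rw [hM2v]
    simp only [Set.mem_insert_iff, Set.mem_diff, Set.mem_singleton_iff]
    push_neg
    exact ⟨huus, fun h => absurd h huM⟩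
  have hKle : (Fintype.card V * Fintype.card V + 1) * (Fintype.card V - (ANb G M2 a).ncard) ≤
      (Fintype.card V * Fintype.card V + 1) * (Fintype.card V - (ANb G M a).ncard) :=
    Nat.mul_le_mul_left _ (Nat.sub_le_sub_left
      (Set.ncard_le_ncard hsub (Set.toFinite _)) _)
  have hfin : (Finset.univ.filter (fun u => u ∉ M2.verts)) =
      insert y ((Finset.univ.filter (fun u => u ∉ M.verts)).erase us) := by
    ext v
    simp only [Finset.mem_insert, Finset.mem_erase, Finset.mem_filter, Finset.mem_univ,
      true_and, hM2v, Set.mem_insert_iff, Set.mem_diff, Set.mem_singleton_iff]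
    push_neg
    constructor
    · rintro ⟨hvus, hv⟩
      by_cases hvy : v = y
      · exact Or.inl hvy
      · exact Or.inr ⟨hvus, fun hvM => absurd (hv hvM) hvy⟩
    · rintro (rfl | ⟨hvus, hv⟩)
      · exact ⟨hyus, fun _ => rfl⟩
      · exact ⟨hvus, fun h => absurd h hv⟩
  have hynotin : y ∉ (Finset.univ.filter (fun u => u ∉ M.verts)).erase us := by
    simp [hy]
  have husin : us ∈ Finset.univ.filter (fun u => u ∉ M.verts) := by simp [hus]
  have hsum2 : ∑ u ∈ Finset.univ.filter (fun u => u ∉ M2.verts), G.dist u a =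
      G.dist y a + ∑ u ∈ (Finset.univ.filter (fun u => u ∉ M.verts)).erase us, G.dist u a := by
    rw [hfin, Finset.sum_insert hynotin]
  have hsum1 := Finset.sum_erase_add (Finset.univ.filter (fun u => u ∉ M.verts))
    (fun u => G.dist u a) husin
  beta_reduce at hsum1
  rw [Phi, Phi]
  rw [Finset.filter_congr_decidable] at *
  omega

end MaxM3

section PartI
set_option linter.unusedSectionVars false
variable {V : Type} [Fintype V] {G : SimpleGraph V}

lemma partI (hconn : G.Connected) (hchair : ¬ Nonempty (Tgraph 3 ↪g G))
    (h2 : ∀ M : G.Subgraph, IsMaxMatching G M → 2 ≤ (M.vertsᶜ).ncard) :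
    ∃ (M : G.Subgraph) (a u1 u2 : V), IsMaxMatching G M ∧ u1 ∉ M.verts ∧ u2 ∉ M.verts ∧
      u1 ≠ u2 ∧ G.Adj a u1 ∧ G.Adj a u2 := by
  classical
  set D := {k | ∃ (M : G.Subgraph) (u u' : V), IsMaxMatching G M ∧ u ∉ M.verts ∧
    u' ∉ M.verts ∧ u ≠ u' ∧ G.dist u u' = k} with hD
  have hDne : D.Nonempty := by
    obtain ⟨M, hM⟩ := exists_maxmatching G
    have hcard : 1 < (M.vertsᶜ).ncard := by have := h2 M hM; omega
    rw [Set.one_lt_ncard_iff (Set.toFinite _)] at hcard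
    obtain ⟨u, u', hu, hu', hne⟩ := hcard
    exact ⟨_, M, u, u', hM, hu, hu', hne, rfl⟩
  have hmem : sInf D ∈ D := Nat.sInf_mem hDne
  rw [hD, Set.mem_setOf_eq] at hmem
  obtain ⟨M, u1, u2, hPM, hu1, hu2, hne12, hdist⟩ := hmem
  rw [← hD] at hdist
  have hmin : ∀ k ∈ D, sInf D ≤ k := fun k hk => Nat.sInf_le hk
  have hM := hPM.1
  have hmax := hPM.2
  have hreach : G.Reachable u1 u2 := hconn.preconnected u1 u2
  have hk0 : sInf D ≠ 0 := fun h => hne12 (hreach.dist_eq_zero_iff.mp (hdist.trans h))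
  have hk1 : sInf D ≠ 1 := fun h =>
    exposed_not_adj hM hmax hu1 hu2 (dist_eq_one_iff_adj.mp (hdist.trans h))
  by_cases hk2 : sInf D = 2
  · obtain ⟨p, hp⟩ := hreach.exists_walk_length_eq_dist
    rw [hdist, hk2] at hp
    cases p with
    | nil => simp at hp
    | cons h q =>
      rename_i w
      cases q with
      | nil => simp at hp
      | cons h2 q2 =>
        rename_i z
        simp only [Walk.length_cons] at hp
        have hz : z = u2 := q2.eq_of_length_eq_zero (by omega)
        exact ⟨M, w, u1, u2, hPM, hu1, hu2, hne12, h.symm, hz ▸ h2⟩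
  · have hk3 : 3 ≤ sInf D := by omega
    obtain ⟨x1, hux1, hd1⟩ := dist_step hconn (show G.dist u1 u2 = (sInf D - 1) + 1 by omega)
    obtain ⟨x2, hx12, hd2⟩ := dist_step hconn (show G.dist x1 u2 = (sInf D - 2) + 1 by omega)
    obtain ⟨x3, hx23, hd3⟩ := dist_step hconn (show G.dist x2 u2 = (sInf D - 3) + 1 by omega)
    have hx1M : x1 ∈ M.verts := by
      by_contra h
      exact exposed_not_adj hM hmax hu1 h hux1
    obtain ⟨x1', hx1'adj, -⟩ := hM hx1M
    have hx1'M : x1' ∈ M.verts := M.edge_vert hx1'adj.symm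
    have hx1'u2 : x1' ≠ u2 := fun h => hu2 (h ▸ hx1'M)
    have hx1u1 : x1 ≠ u1 := fun h => hu1 (h ▸ hx1M)
    have hrot : ∀ x y : V, M.Adj x y → G.Adj u1 x → y ≠ u2 → G.dist y u2 < sInf D → False := by
      intro x y hxy hux hyne hylt
      obtain ⟨M2, hPM2, hM2v⟩ := rotate_max hPM hxy hu1 hux
      have hyM : y ∈ M.verts := M.edge_vert hxy.symm
      have hyu1 : y ≠ u1 := fun h => hu1 (h ▸ hyM)
      have hy2 : y ∉ M2.verts := by
        rw [hM2v]
        simp [hyu1]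
      have hu22 : u2 ∉ M2.verts := by
        rw [hM2v]
        simp only [Set.mem_insert_iff, Set.mem_diff, Set.mem_singleton_iff]
        push_neg
        exact ⟨hne12.symm, fun h => absurd h hu2⟩
      exact absurd (hmin _ ⟨M2, y, u2, hPM2, hy2, hu22, hyne, rfl⟩) (by omega)
    by_cases hb : G.Adj x1' u1
    · refine (hrot x1' x1 hx1'adj.symm hb.symm ?_ ?_).elim
      · intro h; rw [h] at hd1; rw [SimpleGraph.dist_self] at hd1; omega
      · omega
    by_cases hae : x1' = x2
    · refine (hrot x1 x2 (hae ▸ hx1'adj) hux1 ?_ ?_).elim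
      · intro h; rw [h] at hd2; rw [SimpleGraph.dist_self] at hd2; omega
      · omega
    by_cases hc : G.Adj x1' x2
    · refine (hrot x1 x1' hx1'adj hux1 hx1'u2 ?_).elim
      have ht := hconn.dist_triangle (u := x1') (v := x2) (w := u2)
      have h1 : G.dist x1' x2 ≤ 1 := by simpa using dist_le hc.toWalk
      omega
    by_cases he : x1' = x3
    · refine (hrot x1 x1' hx1'adj hux1 hx1'u2 ?_).elim
      rw [he]; omega
    by_cases hd : G.Adj x1' x3
    · refine (hrot x1 x1' hx1'adj hux1 hx1'u2 ?_).elim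
      have ht := hconn.dist_triangle (u := x1') (v := x3) (w := u2)
      have h1 : G.dist x1' x3 ≤ 1 := by simpa using dist_le hd.toWalk
      omega
    exfalso
    refine hchair (chair_builder x1 u1 x1' x2 x3 hux1.symm (M.adj_sub hx1'adj) hx12 hx23
      (fun h => hb h.symm)
      (not_adj_of_dist_gap hconn (a := u2) (by omega))
      (not_adj_of_dist_gap hconn (a := u2) (by omega))
      hc hd
      (not_adj_of_dist_gap hconn (a := u2) (by omega))
      (fun h => hu1 (h ▸ hx1'M))
      (fun h => by rw [h] at hdist; omega)
      hae
      (fun h => by rw [h] at hd1; omega)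
      (fun h => by rw [h] at hdist; omega)
      he)
end PartI

section PartII
set_option linter.unusedSectionVars false
set_option maxHeartbeats 1000000
variable {V : Type} [Fintype V] {G : SimpleGraph V}

lemma partII (hconn : G.Connected) (hchair : ¬ Nonempty (Tgraph 3 ↪g G))
    (h2 : ∀ M : G.Subgraph, IsMaxMatching G M → 2 ≤ (M.vertsᶜ).ncard) :
    ∃ (M : G.Subgraph) (a a' : V), IsMaxMatching G M ∧ a ∈ M.verts ∧ M.Adj a a' ∧
      2 ≤ (ANb G M a).ncard ∧ (∀ u'', u'' ∉ M.verts → ¬ G.Adj a' u'') ∧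
      (∀ u, u ∉ M.verts → G.Adj a u) := by
  classical
  obtain ⟨M₀, a₀, u1₀, u2₀, hPM₀, hu1₀, hu2₀, hne₀, ha1₀, ha2₀⟩ := partI hconn hchair h2
  have hm₀ : 2 ≤ (ANb G M₀ a₀).ncard := by
    have : 1 < (ANb G M₀ a₀).ncard := by
      rw [Set.one_lt_ncard_iff (Set.toFinite _)]
      exact ⟨u1₀, u2₀, ⟨hu1₀, ha1₀⟩, ⟨hu2₀, ha2₀⟩, hne₀⟩
    omega
  have hncard : 2 ≤ Fintype.card V := by
    have h := Set.ncard_le_ncard (Set.subset_univ (ANb G M₀ a₀)) (Set.toFinite _)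
    rw [Set.ncard_univ, Nat.card_eq_fintype_card] at h
    omega
  set D := {k | ∃ (M : G.Subgraph) (a : V), IsMaxMatching G M ∧ k = Phi G M a} with hD
  have hDne : D.Nonempty := ⟨Phi G M₀ a₀, M₀, a₀, hPM₀, rfl⟩
  have hmem : sInf D ∈ D := Nat.sInf_mem hDne
  rw [hD, Set.mem_setOf_eq] at hmem
  obtain ⟨M, a, hPM, hphi⟩ := hmem
  rw [← hD] at hphi
  have hminphi : ∀ (M' : G.Subgraph) (x : V), IsMaxMatching G M' →
      Phi G M a ≤ Phi G M' x := by
    intro M' x h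
    rw [← hphi]
    exact Nat.sInf_le ⟨M', x, h, rfl⟩
  have hM := hPM.1
  have hmax := hPM.2
  have hm : 2 ≤ (ANb G M a).ncard := by
    by_contra hcon
    push_neg at hcon
    have hlt : (ANb G M a).ncard < (ANb G M₀ a₀).ncard := by omega
    have hmn : (ANb G M a).ncard < Fintype.card V := by omega
    exact absurd (phi_bigger hconn hmn hlt) (not_lt.mpr (hminphi M₀ a₀ hPM₀))
  obtain ⟨u1, u2, hu1A, hu2A, hne12⟩ := Set.one_lt_ncard_iff (s := ANb G M a) (Set.toFinite _) |>.mp (by omega)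
  obtain ⟨hu1, ha1⟩ := hu1A
  obtain ⟨hu2, ha2⟩ := hu2A
  have haM : a ∈ M.verts := by
    by_contra h
    exact exposed_not_adj hM hmax h hu1 ha1
  obtain ⟨a', haa', ha'uniq⟩ := hM haM
  have ha'M : a' ∈ M.verts := M.edge_vert haa'.symm
  have ha'exp : ∀ u'', u'' ∉ M.verts → ¬ G.Adj a' u'' := by
    intro u'' hu'' hadj
    rcases eq_or_ne u1 u'' with rfl | hne
    · exact no_aug3 hM hmax hu2 hu'' hne12.symm haa' ha2.symm hadj
    · exact no_aug3 hM hmax hu1 hu'' hne haa' ha1.symm hadj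
  refine ⟨M, a, a', hPM, haM, haa', hm, ha'exp, ?_⟩
  intro us hus
  by_contra hnadj
  -- rotation-based improvement
  have hswap : ∀ x y : V, M.Adj x y → G.Adj us x → G.dist y a < G.dist us a → False := by
    intro x y hxy hux hlt
    obtain ⟨M2, hPM2, hM2v⟩ := rotate_max hPM hxy hus hux
    have hphi2 : Phi G M2 a < Phi G M a :=
      phi_swap hM2v hus (M.edge_vert hxy.symm) hnadj hlt
    exact absurd (hminphi M2 a hPM2) (not_le.mpr hphi2)
  -- center with more exposed neighbours
  have hbig : ∀ w : V, (∀ u', u' ∈ ANb G M a → G.Adj w u') → G.Adj w us → False := by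
    intro w hall hwus
    have hsub : insert us (ANb G M a) ⊆ ANb G M w := by
      rintro u (rfl | hu)
      · exact ⟨hus, hwus⟩
      · exact ⟨hu.1, hall u hu⟩
    have h1 : (insert us (ANb G M a)).ncard = (ANb G M a).ncard + 1 :=
      Set.ncard_insert_of_notMem (fun h => hnadj h.2) (Set.toFinite _)
    have h2' := Set.ncard_le_ncard hsub (Set.toFinite _)
    have hlt : (ANb G M a).ncard < (ANb G M w).ncard := by omega
    exact absurd (phi_bigger hconn (anb_ncard_lt haM) hlt) (not_lt.mpr (hminphi M w hPM))
  have hreach : G.Reachable us a := hconn.preconnected us a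
  have hr0 : G.dist us a ≠ 0 := fun h => hus ((hreach.dist_eq_zero_iff.mp h) ▸ haM)
  have hr1 : G.dist us a ≠ 1 := fun h => hnadj (dist_eq_one_iff_adj.mp h).symm
  by_cases hr2 : G.dist us a = 2
  · -- distance 2 case
    obtain ⟨p, hp⟩ := hreach.exists_walk_length_eq_dist
    rw [hr2] at hp
    cases p with
    | nil => simp at hp
    | cons h q =>
      rename_i w
      cases q with
      | nil => simp at hp
      | cons hq q2 =>
        rename_i z
        simp only [Walk.length_cons] at hp
        have hz : z = a := q2.eq_of_length_eq_zero (by omega)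
        have huw : G.Adj us w := h
        have hwa_adj : G.Adj w a := hz ▸ hq
        have hwM : w ∈ M.verts := by
          by_contra hcon
          exact exposed_not_adj hM hmax hus hcon huw
        obtain ⟨w', hww', -⟩ := hM hwM
        have hw'M : w' ∈ M.verts := M.edge_vert hww'.symm
        have hwa' : w ≠ a' := fun hh => ha'exp us hus (hh ▸ huw.symm)
        have hwa : w ≠ a := hwa_adj.ne
        have hw'a : w' ≠ a := by
          intro hh
          exact hwa' (ha'uniq w (by rw [hh] at hww'; exact hww'.symm))
        have ha'w' : a' ≠ w' := by
          intro hh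
          obtain ⟨z2, hz2, hz2u⟩ := hM ha'M
          have h1 : w = z2 := hz2u w (by rw [← hh] at hww'; exact hww'.symm)
          have h2 : a = z2 := hz2u a haa'.symm
          exact hwa (h1.trans h2.symm)
        by_cases hw'us : G.Adj w' us
        · refine hswap w' w hww'.symm hw'us.symm ?_
          rw [dist_eq_one_iff_adj.mpr hwa_adj]
          omega
        · -- step 1
          have step1 : ∀ ui, ui ∈ ANb G M a → ¬ G.Adj w a' → G.Adj w ui := by
            intro ui hui hnwa'
            by_contra hnwui
            exact hchair (chair_builder a ui a' w us hui.2 (M.adj_sub haa') hwa_adj.symm huw.symm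
              (fun hh => ha'exp ui hui.1 hh.symm)
              (fun hh => hnwui hh.symm)
              (fun hh => exposed_not_adj hM hmax hui.1 hus hh)
              (fun hh => hnwa' hh.symm)
              (fun hh => ha'exp us hus hh)
              hnadj
              (fun hh => hui.1 (hh ▸ ha'M))
              (fun hh => hui.1 (hh ▸ hwM))
              (Ne.symm hwa')
              (fun hh => hus (hh ▸ haM))
              (fun hh => hnadj (hh ▸ hui.2))
              (fun hh => hus (hh ▸ ha'M)))
          have hwa'adj : G.Adj w a' := by
            by_contra hnwa'
            exact hbig w (fun u' hu' => step1 u' hu' hnwa') huw.symm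
          have hw'A : ∀ uj, uj ∈ ANb G M a → ¬ G.Adj w' uj := by
            intro uj huj hadj
            rcases eq_or_ne u1 uj with rfl | hne
            · exact no_aug5 hM hmax hu2 huj.1 hne12.symm haa' hww'
                (Ne.symm hwa) (Ne.symm hw'a) (Ne.symm hwa') ha'w'
                ha2.symm hwa'adj.symm hadj
            · exact no_aug5 hM hmax hu1 huj.1 hne haa' hww'
                (Ne.symm hwa) (Ne.symm hw'a) (Ne.symm hwa') ha'w'
                ha1.symm hwa'adj.symm hadj
          have step3 : ∀ ui, ui ∈ ANb G M a → ¬ G.Adj w' a → G.Adj w ui := by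
            intro ui hui hnw'a
            by_contra hnwui
            exact hchair (chair_builder w us w' a ui huw.symm (M.adj_sub hww') hwa_adj hui.2
              (fun hh => hw'us hh.symm)
              (fun hh => hnadj hh.symm)
              (fun hh => exposed_not_adj hM hmax hus hui.1 hh)
              hnw'a
              (hw'A ui hui)
              hnwui
              (fun hh => hus (hh ▸ hw'M))
              (fun hh => hus (hh ▸ haM))
              hw'a
              (fun hh => hui.1 (hh ▸ hwM))
              (fun hh => hnadj (hh ▸ hui.2))
              (fun hh => hui.1 (hh ▸ hw'M)))
          have hw'a_adj : G.Adj w' a := by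
            by_contra hnw'a
            exact hbig w (fun u' hu' => step3 u' hu' hnw'a) huw.symm
          refine hswap w w' hww' huw ?_
          rw [dist_eq_one_iff_adj.mpr hw'a_adj]
          omega
  · -- distance ≥ 3 case
    have hr3 : 3 ≤ G.dist us a := by omega
    obtain ⟨z1, huz1, he1⟩ := dist_step hconn
      (show G.dist us a = (G.dist us a - 1) + 1 by omega)
    obtain ⟨z2, hz12, he2⟩ := dist_step hconn
      (show G.dist z1 a = (G.dist us a - 2) + 1 by omega)
    obtain ⟨z3, hz23, he3⟩ := dist_step hconn
      (show G.dist z2 a = (G.dist us a - 3) + 1 by omega)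
    have hz1M : z1 ∈ M.verts := by
      by_contra hcon
      exact exposed_not_adj hM hmax hus hcon huz1
    obtain ⟨z1', hz1'adj, -⟩ := hM hz1M
    have hz1'M : z1' ∈ M.verts := M.edge_vert hz1'adj.symm
    by_cases hb : G.Adj z1' us
    · exact hswap z1' z1 hz1'adj.symm hb.symm (by omega)
    by_cases hae : z1' = z2
    · exact hswap z1 z2 (hae ▸ hz1'adj) huz1 (by omega)
    by_cases hc : G.Adj z1' z2
    · refine hswap z1 z1' hz1'adj huz1 ?_
      have ht := hconn.dist_triangle (u := z1') (v := z2) (w := a)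
      have h1 : G.dist z1' z2 ≤ 1 := by simpa using dist_le hc.toWalk
      omega
    by_cases he : z1' = z3
    · refine hswap z1 z1' hz1'adj huz1 ?_
      rw [he]; omega
    by_cases hd : G.Adj z1' z3
    · refine hswap z1 z1' hz1'adj huz1 ?_
      have ht := hconn.dist_triangle (u := z1') (v := z3) (w := a)
      have h1 : G.dist z1' z3 ≤ 1 := by simpa using dist_le hd.toWalk
      omega
    exact hchair (chair_builder z1 us z1' z2 z3 huz1.symm (M.adj_sub hz1'adj) hz12 hz23
      (fun hh => hb hh.symm)
      (not_adj_of_dist_gap hconn (a := a) (by omega))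
      (not_adj_of_dist_gap hconn (a := a) (by omega))
      hc hd
      (not_adj_of_dist_gap hconn (a := a) (by omega))
      (fun hh => hus (hh ▸ hz1'M))
      (fun hh => by rw [← hh] at he2; omega)
      hae
      (fun hh => by rw [hh] at he1; omega)
      (fun hh => by rw [← hh] at he3; omega)
      he)
end PartII

section Core
set_option linter.unusedSectionVars false
set_option maxHeartbeats 1000000
variable {V : Type} [Fintype V] {G : SimpleGraph V}

lemma core (s : ℕ) (hs : 4 ≤ s) (hconn : G.Connected)
    (hstar : ¬ Nonempty (_root_.starGraph s ↪g G)) (hchair : ¬ Nonempty (Tgraph 3 ↪g G)) :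
    deficiency G ≤ s - 2 := by
  classical
  by_contra hdef
  push_neg at hdef
  have hexp : ∀ M : G.Subgraph, IsMaxMatching G M → (M.vertsᶜ).ncard = deficiency G := by
    intro M h
    rw [deficiency, ← maxmatching_card M h, compl_ncard_eq]
  have h2 : ∀ M : G.Subgraph, IsMaxMatching G M → 2 ≤ (M.vertsᶜ).ncard := by
    intro M h
    rw [hexp M h]
    omega
  obtain ⟨M, a, a', hPM, haM, haa', hm, ha'exp, hAall⟩ := partII hconn hchair h2
  have hM := hPM.1
  have hmax := hPM.2
  have hU : s - 1 ≤ (M.vertsᶜ).ncard := by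
    rw [hexp M hPM]
    omega
  have ha'M : a' ∈ M.verts := M.edge_vert haa'.symm
  -- choose s - 1 exposed vertices
  have hFcard : s - 1 ≤ ((M.verts)ᶜ.toFinite.toFinset).card := by
    rwa [← Set.ncard_eq_toFinset_card]
  obtain ⟨T, hTsub, hTcard⟩ := Finset.exists_subset_card_eq hFcard
  have hTexp : ∀ x ∈ T, x ∉ M.verts := by
    intro x hx
    have := hTsub hx
    rw [Set.Finite.mem_toFinset] at this
    exact this
  let g : Fin (s - 1) → V := fun i => (T.equivFin.symm (Fin.cast hTcard.symm i)).1
  have hgT : ∀ i, g i ∈ T := fun i => (T.equivFin.symm (Fin.cast hTcard.symm i)).2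
  have hgexp : ∀ i, g i ∉ M.verts := fun i => hTexp _ (hgT i)
  have hginj : Function.Injective g := by
    intro i j hij
    have := T.equivFin.symm.injective (Subtype.ext hij)
    simpa [Fin.ext_iff] using congrArg Fin.val this
  let f : Fin s → V := fun i => if h : (i : ℕ) < s - 1 then g ⟨i, h⟩ else a'
  have hfinj : Function.Injective f := by
    intro i j hij
    simp only [f] at hij
    split_ifs at hij with h1 h2 h2
    · have := hginj hij
      simpa [Fin.ext_iff] using congrArg Fin.val this
    · exact absurd (hij ▸ ha'M) (hgexp _)
    · exact absurd (hij ▸ ha'M) (fun hh => (hgexp _) ((hij.symm) ▸ ha'M))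
    · have hi := i.isLt
      have hj := j.isLt
      rw [Fin.ext_iff]
      omega
  have hfadj : ∀ i, G.Adj a (f i) := by
    intro i
    simp only [f]
    split_ifs with h1
    · exact hAall _ (hgexp _)
    · exact M.adj_sub haa'
  have hfind : ∀ i j, i ≠ j → ¬ G.Adj (f i) (f j) := by
    intro i j hij
    simp only [f]
    split_ifs with h1 h2 h2
    · exact fun h => exposed_not_adj hM hmax (hgexp _) (hgexp _) h
    · exact fun h => ha'exp _ (hgexp _) h.symm
    · exact fun h => ha'exp _ (hgexp _) h
    · exact absurd (by rw [Fin.ext_iff]; have := i.isLt; have := j.isLt; omega) hij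
  exact hstar (star_builder a f hfinj hfadj hfind)
end Core

end AuxProof

/-- Let `s ≥ 4`. Every connected `{K_{1,s}, T₃}`-free graph has deficiency at most
`s − 2`, and every connected `{K_{1,s}, P₄}`-free graph has deficiency at most `s − 2`. -/
theorem deficiency_le_of_star_T3_or_P4_free (s : ℕ) (hs : 4 ≤ s) :
    (∀ (V : Type) [Fintype V] (G : SimpleGraph V), G.Connected →
      ¬ Nonempty (_root_.starGraph s ↪g G) → ¬ Nonempty (Tgraph 3 ↪g G) →
      deficiency G ≤ s - 2) ∧
    (∀ (V : Type) [Fintype V] (G : SimpleGraph V), G.Connected →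
      ¬ Nonempty (_root_.starGraph s ↪g G) → ¬ Nonempty (pathGraph 4 ↪g G) →
      deficiency G ≤ s - 2) := by
  constructor
  · intro V _ G hconn hstar hchair
    exact core s hs hconn hstar hchair
  · intro V _ G hconn hstar hp4
    exact core s hs hconn hstar (chairfree_of_p4free hp4)
end

section
/- Every connected claw-free graph has deficiency at most one; that is, if G is a connected graph with no induced K_{1,3}, then def(G) ≤ 1. -/
open SimpleGraph

section ClawFreeAux
set_option linter.unusedSectionVars false

variable {V : Type} [Fintype V] {G : SimpleGraph V} {M : G.Subgraph}

lemma claw_embedding {x p q r : V} (hxp : G.Adj x p) (hxq : G.Adj x q) (hxr : G.Adj x r)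
    (hpq : ¬ G.Adj p q) (hpr : ¬ G.Adj p r) (hqr : ¬ G.Adj q r)
    (hpq' : p ≠ q) (hpr' : p ≠ r) (hqr' : q ≠ r) : Nonempty (_root_.starGraph 3 ↪g G) := by
  refine ⟨⟨Sum.elim (fun _ => x) ![p, q, r], ?_⟩, ?_⟩
  · rintro (⟨⟩ | i) (⟨⟩ | j) hij
    · rfl
    · exfalso; revert hij; fin_cases j <;> simp <;>
        [exact hxp.ne; exact hxq.ne; exact hxr.ne]
    · exfalso; revert hij; fin_cases i <;> simp <;>
        [exact hxp.ne'; exact hxq.ne'; exact hxr.ne']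
    · congr 1; revert hij; fin_cases i <;> fin_cases j <;> simp_all <;>
        first
        | exact fun h => hpq' h.symm
        | exact fun h => hpr' h.symm
        | exact fun h => hqr' h.symm
  · rintro (⟨⟩ | i) (⟨⟩ | j)
    · simp [_root_.starGraph, completeBipartiteGraph]
    · fin_cases j <;> simp [_root_.starGraph, completeBipartiteGraph, hxp, hxq, hxr] <;>
        [exact hxp; exact hxq; exact hxr]
    · fin_cases i <;> simp [_root_.starGraph, completeBipartiteGraph, hxp.symm, hxq.symm, hxr.symm] <;>
        [exact hxp.symm; exact hxq.symm; exact hxr.symm]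
    · fin_cases i <;> fin_cases j <;> simp [_root_.starGraph, completeBipartiteGraph] <;>
        first
        | exact hpq
        | exact hpr
        | exact hqr
        | exact fun h => hpq h.symm
        | exact fun h => hpr h.symm
        | exact fun h => hqr h.symm


variable {V : Type} [Fintype V] {G : SimpleGraph V} {M : G.Subgraph}

/-- Augment: add an edge between two exposed vertices. -/
lemma matching_augment (hM : M.IsMatching) {a c : V} (ha : a ∉ M.verts) (hc : c ∉ M.verts)
    (hadj : G.Adj a c) : ∃ M' : G.Subgraph, M'.IsMatching ∧
      M'.verts.ncard = M.verts.ncard + 2 := by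
  refine ⟨M ⊔ G.subgraphOfAdj hadj, ?_, ?_⟩
  · refine hM.sup (Subgraph.IsMatching.subgraphOfAdj hadj) ?_
    rw [hM.support_eq_verts, (Subgraph.IsMatching.subgraphOfAdj hadj).support_eq_verts,
      subgraphOfAdj_verts]
    rw [Set.disjoint_right]
    rintro v (rfl | rfl) <;> assumption
  · rw [Subgraph.verts_sup, subgraphOfAdj_verts,
      Set.ncard_union_eq (by rw [Set.disjoint_right]; rintro v (rfl | rfl) <;> assumption)
        (Set.toFinite _) (Set.toFinite _),
      Set.ncard_pair hadj.ne]

/-- Deleting both endpoints of a matching edge keeps a matching. -/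
lemma matching_delete (hM : M.IsMatching) {c w : V} (hcw : M.Adj c w) :
    (M.deleteVerts {c, w}).IsMatching := by
  intro v hv
  rw [Subgraph.deleteVerts_verts, Set.mem_diff] at hv
  obtain ⟨hv1, hv2⟩ := hv
  obtain ⟨z, hz, hzu⟩ := hM hv1
  have hzc : z ≠ c := by
    rintro rfl
    obtain ⟨u, hu, huu⟩ := hM (M.edge_vert hcw)
    have hvw : v = w := (huu v hz.symm).trans (huu w hcw).symm
    exact hv2 (by simp [hvw])
  have hzw : z ≠ w := by
    rintro rfl
    obtain ⟨u, hu, huu⟩ := hM (M.edge_vert hcw.symm)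
    have hvc : v = c := (huu v hz.symm).trans (huu c hcw.symm).symm
    exact hv2 (by simp [hvc])
  refine ⟨z, ?_, fun y hy => hzu y (Subgraph.deleteVerts_adj.mp hy).2.2.2.2⟩
  show (M.deleteVerts {c, w}).Adj v z
  rw [Subgraph.deleteVerts_adj]
  refine ⟨hv1, hv2, M.edge_vert hz.symm, ?_, hz⟩
  rintro (rfl | rfl) <;> simp_all

/-- Swap: given a matching edge `c-w` and an exposed vertex `a` adjacent to `c`,
replace `c-w` by `a-c`. The new matching has the same size, exposes `w`,
and keeps every other exposed vertex exposed. -/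
lemma matching_swap (hM : M.IsMatching) {c w a : V} (hcw : M.Adj c w) (ha : a ∉ M.verts)
    (hac : G.Adj a c) : ∃ M' : G.Subgraph, M'.IsMatching ∧
      M'.verts.ncard = M.verts.ncard ∧ w ∉ M'.verts ∧
      ∀ b, b ∉ M.verts → b ≠ a → b ∉ M'.verts := by
  have hcv : c ∈ M.verts := M.edge_vert hcw
  have hwv : w ∈ M.verts := M.edge_vert hcw.symm
  have hcwne : c ≠ w := (M.adj_sub hcw).ne
  have hax : a ≠ c := fun h => ha (h ▸ hcv)
  have haw : a ≠ w := fun h => ha (h ▸ hwv)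
  have hdisj : Disjoint (M.verts \ {c, w}) {a, c} := by
    rw [Set.disjoint_right]
    rintro v (rfl | rfl)
    · exact fun h => ha h.1
    · exact fun h => h.2 (Set.mem_insert _ _)
  refine ⟨M.deleteVerts {c, w} ⊔ G.subgraphOfAdj hac, ?_, ?_, ?_, ?_⟩
  · refine (matching_delete hM hcw).sup (Subgraph.IsMatching.subgraphOfAdj hac) ?_
    rw [(matching_delete hM hcw).support_eq_verts,
      (Subgraph.IsMatching.subgraphOfAdj hac).support_eq_verts, subgraphOfAdj_verts,
      Subgraph.deleteVerts_verts]
    exact hdisj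
  · rw [Subgraph.verts_sup, Subgraph.deleteVerts_verts, subgraphOfAdj_verts,
      Set.ncard_union_eq hdisj (Set.toFinite _) (Set.toFinite _),
      Set.ncard_diff (by rintro v (rfl | rfl) <;> assumption) (Set.toFinite _),
      Set.ncard_pair hcwne, Set.ncard_pair hax]
    have h2 : 2 ≤ M.verts.ncard := by
      have := Set.ncard_le_ncard (show {c, w} ⊆ M.verts by rintro v (rfl | rfl) <;> assumption)
        (Set.toFinite _)
      rwa [Set.ncard_pair hcwne] at this
    omega
  · rw [Subgraph.verts_sup, Subgraph.deleteVerts_verts]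
    rintro ((⟨-, h⟩) | (rfl | rfl))
    · exact h (by simp)
    · exact haw rfl
    · exact hcwne rfl
  · intro b hb hba
    rw [Subgraph.verts_sup, Subgraph.deleteVerts_verts]
    rintro ((⟨h, -⟩) | (rfl | rfl))
    · exact hb h
    · exact hba rfl
    · exact hb hcv


/-- Key lemma: a maximum matching in a connected claw-free graph cannot leave
two vertices exposed. Induction on the distance between the exposed vertices. -/
lemma no_two_exposed {V : Type} [Fintype V] {G : SimpleGraph V}
    (hconn : G.Connected) (hclaw : ¬ Nonempty (_root_.starGraph 3 ↪g G)) :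
    ∀ d (M : G.Subgraph), M.IsMatching →
      (∀ M' : G.Subgraph, M'.IsMatching → M'.verts.ncard ≤ M.verts.ncard) →
      ∀ a b, a ∉ M.verts → b ∉ M.verts → a ≠ b → G.dist a b ≤ d → False := by
  intro d
  induction d using Nat.strong_induction_on with
  | _ d ih =>
  intro M hM hmax a b ha hb hab hd
  obtain ⟨p, hp⟩ := hconn.exists_walk_length_eq_dist a b
  cases p with
  | nil => exact hab rfl
  | @cons _ x1 _ h q =>
    cases q with
    | nil =>
      obtain ⟨M', hM', hc⟩ := matching_augment hM ha hb h
      have := hmax M' hM'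
      omega
    | @cons _ x2 _ h' r =>
      rw [Walk.length_cons, Walk.length_cons] at hp
      have hx1 : x1 ∈ M.verts := by
        by_contra hx1
        obtain ⟨M', hM', hc⟩ := matching_augment hM ha hx1 h
        have := hmax M' hM'
        omega
      obtain ⟨y, hy, hyu⟩ := hM hx1
      have hyv : y ∈ M.verts := M.edge_vert hy.symm
      have hGy : G.Adj x1 y := M.adj_sub hy
      have hya : y ≠ a := fun hh => ha (hh ▸ hyv)
      have hx2b : G.dist x2 b ≤ r.length := dist_le r
      have hax2 : ¬ G.Adj a x2 := fun hh => by
        have := dist_le (Walk.cons hh r)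
        simp only [Walk.length_cons] at this
        omega
      have hax2' : a ≠ x2 := by
        rintro rfl
        have := dist_le r
        omega
      have hdge : 2 ≤ d := by omega
      have hd1 : d - 1 < d := by omega
      by_cases hyx2 : y = x2
      · subst hyx2
        obtain ⟨M', hM', hc, hw, hkeep⟩ := matching_swap hM hy ha h
        exact ih (d - 1) hd1 M' hM' (fun M'' h'' => hc ▸ hmax M'' h'') y b hw
          (hkeep b hb hab.symm) (fun hh => hb (hh ▸ hyv)) (by omega)
      · by_cases hyx2a : G.Adj y x2
        · obtain ⟨M', hM', hc, hw, hkeep⟩ := matching_swap hM hy ha h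
          have hdyb : G.dist y b ≤ d - 1 := by
            have := dist_le (Walk.cons hyx2a r)
            simp only [Walk.length_cons] at this
            omega
          exact ih (d - 1) hd1 M' hM' (fun M'' h'' => hc ▸ hmax M'' h'') y b hw
            (hkeep b hb hab.symm) (fun hh => hb (hh ▸ hyv)) hdyb
        · by_cases hay : G.Adj a y
          · obtain ⟨M', hM', hc, hw, hkeep⟩ := matching_swap hM hy.symm ha hay
            have hdx1b : G.dist x1 b ≤ d - 1 := by
              have := dist_le (Walk.cons h' r)
              simp only [Walk.length_cons] at this
              omega
            exact ih (d - 1) hd1 M' hM' (fun M'' h'' => hc ▸ hmax M'' h'') x1 b hw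
              (hkeep b hb hab.symm) (fun hh => hb (hh ▸ hx1)) hdx1b
          · exact hclaw (claw_embedding h.symm h' hGy hax2 hay
              (fun hh => hyx2a hh.symm) hax2' (fun hh => hya hh.symm)
              (fun hh => hyx2 hh.symm))

end ClawFreeAux

/-- Every connected claw-free graph has deficiency at most one. -/
theorem deficiency_le_one_of_clawfree (V : Type) [Fintype V] (G : SimpleGraph V)
    (hconn : G.Connected) (hclaw : ¬ Nonempty (_root_.starGraph 3 ↪g G)) :
    deficiency G ≤ 1 := by
  classical
  set S : Set ℕ := {k | ∃ M : G.Subgraph, M.IsMatching ∧ M.verts.ncard = k} with hS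
  have h0 : 0 ∈ S := ⟨⊥, fun v hv => by simp [Subgraph.verts_bot] at hv,
    by simp [Subgraph.verts_bot]⟩
  have hbdd : BddAbove S := by
    refine ⟨Fintype.card V, ?_⟩
    rintro k ⟨M, -, rfl⟩
    calc M.verts.ncard ≤ (Set.univ : Set V).ncard :=
          Set.ncard_le_ncard (Set.subset_univ _) (Set.toFinite _)
      _ = Fintype.card V := by rw [Set.ncard_univ, Nat.card_eq_fintype_card]
  obtain ⟨M, hM, hcard⟩ := Nat.sSup_mem ⟨0, h0⟩ hbdd
  have hmax : ∀ M' : G.Subgraph, M'.IsMatching → M'.verts.ncard ≤ M.verts.ncard := by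
    intro M' hM'
    rw [hcard]
    exact le_csSup hbdd ⟨M', hM', rfl⟩
  show Fintype.card V - sSup S ≤ 1
  rw [← hcard]
  by_contra hcon
  push_neg at hcon
  have hcompl : M.verts.ncard + M.vertsᶜ.ncard = Fintype.card V := by
    rw [Set.ncard_add_ncard_compl _ (Set.toFinite _) (Set.toFinite _),
      Nat.card_eq_fintype_card]
  have h2 : 1 < M.vertsᶜ.ncard := by omega
  obtain ⟨a, ha, b, hb, hab⟩ := (Set.one_lt_ncard (Set.toFinite _)).mp h2
  exact no_two_exposed hconn hclaw (G.dist a b) M hM hmax a b ha hb hab le_rfl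
end

section
/- Let s ≥ 4 be an integer and let G be a connected graph containing no induced K_{1,s} and no induced B_i for any i ≥ 0. Then def(G) ≤ s − 2. -/
open SimpleGraph

set_option linter.unusedSectionVars false

namespace DefAux

variable {V : Type} [Fintype V] {G : SimpleGraph V}

/-- The set of matching sizes. -/
def MSet (G : SimpleGraph V) : Set ℕ :=
  {k : ℕ | ∃ M : G.Subgraph, M.IsMatching ∧ M.verts.ncard = k}

lemma mset_nonempty (G : SimpleGraph V) : (MSet G).Nonempty := by
  refine ⟨0, ⊥, ?_, by simp [Subgraph.verts_bot]⟩
  intro v hv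
  simp [Subgraph.verts_bot] at hv

lemma mset_bddAbove (G : SimpleGraph V) : BddAbove (MSet G) := by
  refine ⟨Fintype.card V, fun k hk => ?_⟩
  obtain ⟨M, -, rfl⟩ := hk
  calc M.verts.ncard ≤ (Set.univ : Set V).ncard :=
        Set.ncard_le_ncard (Set.subset_univ _) (Set.toFinite _)
    _ = Fintype.card V := by rw [Set.ncard_univ, Nat.card_eq_fintype_card]

lemma deficiency_le_of_matching (M : G.Subgraph) (hM : M.IsMatching) :
    deficiency G ≤ Fintype.card V - M.verts.ncard := by
  have : M.verts.ncard ∈ MSet G := ⟨M, hM, rfl⟩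
  have h := le_csSup (mset_bddAbove G) this
  unfold deficiency
  exact Nat.sub_le_sub_left h _

/-- Walks avoiding a set of vertices. -/
def Avoid (G : SimpleGraph V) (S : Set V) (a b : V) : Prop :=
  ∃ w : G.Walk a b, ∀ y ∈ w.support, y ∉ S

lemma Avoid.refl {S : Set V} {a : V} (ha : a ∉ S) : Avoid G S a a :=
  ⟨Walk.nil, by simpa using ha⟩

lemma Avoid.symm {S : Set V} {a b : V} (h : Avoid G S a b) : Avoid G S b a := by
  obtain ⟨w, hw⟩ := h
  exact ⟨w.reverse, fun y hy => hw y (by simpa [Walk.support_reverse] using hy)⟩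

lemma Avoid.trans {S : Set V} {a b c : V} (h : Avoid G S a b) (h' : Avoid G S b c) :
    Avoid G S a c := by
  obtain ⟨w, hw⟩ := h
  obtain ⟨w', hw'⟩ := h'
  refine ⟨w.append w', fun y hy => ?_⟩
  rcases (Walk.mem_support_append_iff _ _).1 hy with h | h
  · exact hw y h
  · exact hw' y h

lemma Avoid.step {S : Set V} {a b c : V} (h : Avoid G S a b) (hbc : G.Adj b c)
    (hc : c ∉ S) : Avoid G S a c := by
  obtain ⟨w, hw⟩ := h
  refine ⟨w.append (Walk.cons hbc Walk.nil), fun y hy => ?_⟩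
  rcases (Walk.mem_support_append_iff _ _).1 hy with h | h
  · exact hw y h
  · simp only [Walk.support_cons, Walk.support_nil, List.mem_cons,
      List.not_mem_nil, or_false] at h
    rcases h with rfl | rfl
    · exact hw y w.end_mem_support
    · exact hc

lemma Avoid.notMem {S : Set V} {a b : V} (h : Avoid G S a b) : a ∉ S ∧ b ∉ S := by
  obtain ⟨w, hw⟩ := h
  exact ⟨hw a w.start_mem_support, hw b w.end_mem_support⟩

/-- predecessor on a geodesic -/
lemma exists_pred (hconn : G.Connected) {r x : V} {n : ℕ} (h : G.dist r x = n + 1) :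
    ∃ y, G.Adj y x ∧ G.dist r y = n := by
  obtain ⟨p, hp⟩ := hconn.exists_walk_length_eq_dist r x
  rw [h] at hp
  have hq := p.reverse
  cases hq' : p.reverse with
  | nil =>
    have : p.length = 0 := by
      have := congrArg Walk.length hq'
      simpa using this
    omega
  | cons hadj w =>
    rename_i c
    refine ⟨c, hadj.symm, ?_⟩
    have hlen : w.length = n := by
      have := congrArg Walk.length hq'
      simp [Walk.length_reverse] at this
      omega
    have h1 : G.dist r c ≤ n := by
      have := SimpleGraph.dist_le w.reverse
      simpa [Walk.length_reverse, hlen, SimpleGraph.dist_comm] using this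
    have h2 : G.dist r x ≤ G.dist r c + 1 := by
      have htri := hconn.dist_triangle (u := r) (v := c) (w := x)
      have : G.dist c x ≤ 1 := by
        have := SimpleGraph.dist_le (Walk.cons hadj.symm Walk.nil : G.Walk c x)
        simpa using this
      omega
    omega

/-- geodesic avoidance: if `w` is no farther from `r` than anything in `S`,
and `w ∉ S`, then `w` is reachable from `r` avoiding `S`. -/
lemma geoAvoid (hconn : G.Connected) {r : V} {S : Set V} :
    ∀ n {x : V}, G.dist r x = n → x ∉ S → (∀ y ∈ S, G.dist r x ≤ G.dist r y) →
      Avoid G S r x := by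
  intro n
  induction n with
  | zero =>
    intro x hx hxS _
    have : r = x := by
      have := (hconn.dist_eq_zero_iff (u := r) (v := x)).1 hx
      exact this
    subst this
    exact Avoid.refl hxS
  | succ n ih =>
    intro x hx hxS hle
    obtain ⟨y, hyx, hy⟩ := exists_pred hconn hx
    have hyS : y ∉ S := by
      intro hmem
      have := hle y hmem
      omega
    have : Avoid G S r y := by
      refine ih hy hyS (fun z hz => ?_)
      have := hle z hz
      omega
    exact this.step hyx hxS

/-- From `s` pairwise-nonadjacent neighbors of `z`, build an induced `K_{1,s}`. -/
lemma star_embedding {s : ℕ} {z : V} {X : Set V} (hzX : z ∉ X)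
    (hadj : ∀ x ∈ X, G.Adj z x)
    (hind : ∀ x ∈ X, ∀ y ∈ X, x ≠ y → ¬G.Adj x y)
    (hcard : s ≤ X.ncard) :
    Nonempty (completeBipartiteGraph Unit (Fin s) ↪g G) := by
  obtain ⟨t, hts, htcard⟩ := Set.exists_subset_card_eq hcard
  have : Fintype t := (Set.toFinite t).fintype
  have hcard' : t.toFinset.card = s := by
    rw [← Set.ncard_eq_toFinset_card']; exact htcard
  obtain e := (Finset.equivFinOfCardEq hcard').symm
  -- e : Fin s ≃ t.toFinset
  set f : Unit ⊕ Fin s → V := fun a => match a with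
    | Sum.inl _ => z
    | Sum.inr i => ((e i : t.toFinset) : V) with hf
  have hmem : ∀ i : Fin s, ((e i : t.toFinset) : V) ∈ X := by
    intro i
    have := (e i).2
    rw [Set.mem_toFinset] at this
    exact hts this
  have heinj : ∀ i j : Fin s, ((e i : t.toFinset) : V) = ((e j : t.toFinset) : V) → i = j := by
    intro i j hij
    have : e i = e j := Subtype.ext hij
    exact e.injective this
  refine ⟨⟨⟨f, ?_⟩, ?_⟩⟩
  · intro a b hab
    match a, b with
    | Sum.inl _, Sum.inl _ => rfl
    | Sum.inl _, Sum.inr j =>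
      exfalso
      simp only [hf] at hab
      exact hzX (hab ▸ hmem j)
    | Sum.inr i, Sum.inl _ =>
      exfalso
      simp only [hf] at hab
      exact hzX (hab ▸ hmem i)
    | Sum.inr i, Sum.inr j => simp only [hf] at hab; rw [heinj i j hab]
  · intro a b
    match a, b with
    | Sum.inl _, Sum.inl _ =>
      simp [hf, completeBipartiteGraph]
    | Sum.inl _, Sum.inr j =>
      simp only [hf, completeBipartiteGraph]
      simpa using (hadj _ (hmem j))
    | Sum.inr i, Sum.inl _ =>
      simp only [hf, completeBipartiteGraph]
      simpa using (hadj _ (hmem i)).symm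
    | Sum.inr i, Sum.inr j =>
      simp only [hf, completeBipartiteGraph]
      constructor
      · intro h
        exact absurd h (by
          by_cases hij : i = j
          · subst hij; exact G.irrefl
          · exact hind _ (hmem i) _ (hmem j) (fun hh => hij (heinj i j hh)))
      · simp

lemma matching_extend {M : G.Subgraph} (hM : M.IsMatching) {x y : V} (hxy : G.Adj x y)
    (hx : x ∉ M.verts) (hy : y ∉ M.verts) :
    ∃ M' : G.Subgraph, M'.IsMatching ∧ M'.verts = M.verts ∪ {x, y} := by
  refine ⟨M ⊔ G.subgraphOfAdj hxy, ?_, ?_⟩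
  · refine hM.sup (Subgraph.IsMatching.subgraphOfAdj hxy) ?_
    rw [hM.support_eq_verts, (Subgraph.IsMatching.subgraphOfAdj hxy).support_eq_verts,
      SimpleGraph.subgraphOfAdj_verts]
    rw [Set.disjoint_left]
    intro a ha hmem
    rcases hmem with rfl | hmem
    · exact hx ha
    · simp only [Set.mem_singleton_iff] at hmem; subst hmem; exact hy ha
  · rw [Subgraph.verts_sup, SimpleGraph.subgraphOfAdj_verts]

lemma ncard_matching_extend {M : G.Subgraph} {x y : V} (hxy : x ≠ y)
    (hx : x ∉ M.verts) (hy : y ∉ M.verts) :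
    (M.verts ∪ {x, y}).ncard = M.verts.ncard + 2 := by
  rw [Set.ncard_union_eq ?_ (Set.toFinite _) (Set.toFinite _), Set.ncard_pair hxy]
  rw [Set.disjoint_right]
  intro a ha hmem
  rcases ha with rfl | ha
  · exact hx hmem
  · simp only [Set.mem_singleton_iff] at ha; subst ha; exact hy hmem

/-- case of a dominating vertex -/
lemma dominating_case {s : ℕ} (hs : 4 ≤ s) (z : V) (hz : ∀ w, w ≠ z → G.Adj z w)
    (hstar : ¬ Nonempty (completeBipartiteGraph Unit (Fin s) ↪g G)) :
    deficiency G ≤ s - 2 := by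
  classical
  set A : Set ℕ := {k : ℕ | ∃ M : G.Subgraph, M.IsMatching ∧ z ∉ M.verts ∧ M.verts.ncard = k}
    with hA
  have hAne : A.Nonempty := by
    refine ⟨0, ⊥, ?_, by simp [Subgraph.verts_bot], by simp [Subgraph.verts_bot]⟩
    intro v hv; simp [Subgraph.verts_bot] at hv
  have hAbdd : BddAbove A := by
    refine ⟨Fintype.card V, fun k hk => ?_⟩
    obtain ⟨M, -, -, rfl⟩ := hk
    calc M.verts.ncard ≤ (Set.univ : Set V).ncard :=
          Set.ncard_le_ncard (Set.subset_univ _) (Set.toFinite _)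
      _ = Fintype.card V := by rw [Set.ncard_univ, Nat.card_eq_fintype_card]
  obtain ⟨M₁, hM₁, hzM₁, hM₁card⟩ := Nat.sSup_mem hAne hAbdd
  set m := sSup A with hm
  set X : Set V := Set.univ \ insert z M₁.verts with hX
  have hXz : z ∉ X := by simp [hX]
  have hXM : ∀ x ∈ X, x ≠ z ∧ x ∉ M₁.verts := by
    intro x hx
    simp only [hX, Set.mem_diff, Set.mem_insert_iff, not_or] at hx
    exact ⟨hx.2.1, hx.2.2⟩
  have hXcard : X.ncard = Fintype.card V - (m + 1) := by
    rw [hX, Set.ncard_diff (Set.subset_univ _) (Set.toFinite _)]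
    rw [Set.ncard_insert_of_notMem hzM₁ (Set.toFinite _), hM₁card]
    rw [Set.ncard_univ, Nat.card_eq_fintype_card]
  have hmcard : m + 1 ≤ Fintype.card V := by
    have : (insert z M₁.verts).ncard ≤ (Set.univ : Set V).ncard :=
      Set.ncard_le_ncard (Set.subset_univ _) (Set.toFinite _)
    rw [Set.ncard_insert_of_notMem hzM₁ (Set.toFinite _), hM₁card,
      Set.ncard_univ, Nat.card_eq_fintype_card] at this
    omega
  have hind : ∀ x ∈ X, ∀ y ∈ X, x ≠ y → ¬G.Adj x y := by
    intro x hx y hy hne hadj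
    obtain ⟨M', hM', hMv⟩ := matching_extend hM₁ hadj (hXM x hx).2 (hXM y hy).2
    have : M'.verts.ncard ∈ A := by
      refine ⟨M', hM', ?_, rfl⟩
      rw [hMv]
      intro hmem
      rcases hmem with hmem | hmem
      · exact hzM₁ hmem
      · rcases hmem with rfl | hmem
        · exact (hXM _ hx).1 rfl
        · simp only [Set.mem_singleton_iff] at hmem
          exact (hXM _ hy).1 hmem.symm
    have hle := le_csSup hAbdd this
    rw [hMv, ncard_matching_extend hne (hXM x hx).2 (hXM y hy).2, hM₁card] at hle
    omega
  by_cases hXe : X = ∅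
  · -- M₁ covers everything except possibly z
    have huniv : (Set.univ : Set V) ⊆ insert z M₁.verts := by
      intro a _
      by_contra h
      have : a ∈ X := by simp [hX, h]
      rw [hXe] at this; exact this
    have hcard : Fintype.card V ≤ m + 1 := by
      have := Set.ncard_le_ncard huniv (Set.toFinite _)
      rw [Set.ncard_insert_of_notMem hzM₁ (Set.toFinite _), hM₁card,
        Set.ncard_univ, Nat.card_eq_fintype_card] at this
      omega
    have := deficiency_le_of_matching M₁ hM₁
    rw [hM₁card] at this
    omega
  · obtain ⟨x₁, hx₁⟩ := Set.nonempty_iff_ne_empty.2 hXe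
    have hadjzx : G.Adj z x₁ := hz x₁ (hXM _ hx₁).1
    obtain ⟨M', hM', hMv⟩ := matching_extend hM₁ hadjzx hzM₁ (hXM _ hx₁).2
    have hdef := deficiency_le_of_matching M' hM'
    have hne : z ≠ x₁ := fun h => (hXM _ hx₁).1 h.symm
    rw [hMv, ncard_matching_extend hne hzM₁ (hXM _ hx₁).2, hM₁card] at hdef
    have hXle : X.ncard ≤ s - 1 := by
      by_contra hgt
      push_neg at hgt
      have : s ≤ X.ncard := by omega
      exact hstar (star_embedding hXz (fun x hx => hz x (hXM x hx).1) hind this)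
    have hXpos : 1 ≤ X.ncard := by
      have : 0 < X.ncard := (Set.ncard_pos (Set.toFinite _)).2 ⟨x₁, hx₁⟩
      omega
    omega

/-- The embedding of the delete-verts coe graph into `G`. -/
def delEmbedding (G : SimpleGraph V) (S : Set V) :
    ((⊤ : G.Subgraph).deleteVerts S).coe ↪g G := by
  refine ⟨⟨Subtype.val, Subtype.val_injective⟩, ?_⟩
  intro a b
  simp only [Function.Embedding.coeFn_mk, Subgraph.coe_adj, Subgraph.deleteVerts_adj,
    Subgraph.verts_top, Set.mem_univ, true_and, Subgraph.top_adj]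
  constructor
  · intro h
    exact ⟨(Set.mem_diff _).1 a.2 |>.2, (Set.mem_diff _).1 b.2 |>.2, h⟩
  · tauto

lemma connected_del_of_avoid (S : Set V)
    (hne : Nonempty ((⊤ : G.Subgraph).deleteVerts S).verts)
    (h : ∀ a b : V, a ∉ S → b ∉ S → Avoid G S a b) :
    ((⊤ : G.Subgraph).deleteVerts S).coe.Connected := by
  set H := ((⊤ : G.Subgraph).deleteVerts S).coe with hH
  have key : ∀ {a b : V} (w : G.Walk a b), (∀ y ∈ w.support, y ∉ S) →
      ∀ (ha : a ∈ ((⊤ : G.Subgraph).deleteVerts S).verts)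
        (hb : b ∈ ((⊤ : G.Subgraph).deleteVerts S).verts),
        H.Reachable ⟨a, ha⟩ ⟨b, hb⟩ := by
    intro a b w
    induction w with
    | nil => intro _ ha hb; rfl
    | @cons a c b hadj p ih =>
      intro hw ha hb
      have hcS : c ∉ S := by
        apply hw
        simp [Walk.support_cons]
      have hc : c ∈ ((⊤ : G.Subgraph).deleteVerts S).verts := by
        simp only [Subgraph.deleteVerts_verts, Subgraph.verts_top]
        exact ⟨Set.mem_univ _, hcS⟩
      have hstep : H.Adj ⟨a, ha⟩ ⟨c, hc⟩ := by
        simp only [hH, Subgraph.coe_adj, Subgraph.deleteVerts_adj, Subgraph.verts_top,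
          Set.mem_univ, true_and, Subgraph.top_adj]
        refine ⟨?_, hcS, hadj⟩
        · have := (Set.mem_diff _).1 ha
          exact this.2
      refine hstep.reachable.trans (ih ?_ hc hb)
      intro y hy
      exact hw y (by simp [Walk.support_cons, hy])
  constructor
  intro x y
  obtain ⟨a, ha⟩ := x
  obtain ⟨b, hb⟩ := y
  have haS : a ∉ S := ((Set.mem_diff _).1 ha).2
  have hbS : b ∉ S := ((Set.mem_diff _).1 hb).2
  obtain ⟨w, hw⟩ := h a b haS hbS
  exact key w hw ha hb

lemma card_del_pair {u v : V} (huv : u ≠ v) :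
    Nat.card ((⊤ : G.Subgraph).deleteVerts {u, v}).verts = Fintype.card V - 2 := by
  rw [Nat.card_coe_set_eq, Subgraph.deleteVerts_verts, Subgraph.verts_top]
  rw [Set.ncard_diff (Set.subset_univ _) (Set.toFinite _), Set.ncard_pair huv,
    Set.ncard_univ, Nat.card_eq_fintype_card]

lemma reduce_two {u v : V} (huv : G.Adj u v) {t : ℕ}
    [Fintype ((⊤ : G.Subgraph).deleteVerts {u, v}).verts]
    (hdef : deficiency ((⊤ : G.Subgraph).deleteVerts {u, v}).coe ≤ t) :
    deficiency G ≤ t := by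
  classical
  set H := ((⊤ : G.Subgraph).deleteVerts {u, v}).coe with hH
  obtain ⟨Mt, hMt, hMtcard⟩ := Nat.sSup_mem (mset_nonempty H) (mset_bddAbove H)
  set mH := sSup (MSet H) with hmH
  have hcardH : Fintype.card ((⊤ : G.Subgraph).deleteVerts {u, v}).verts
      = Fintype.card V - 2 := by
    rw [← Nat.card_eq_fintype_card]
    exact card_del_pair huv.ne
  have hdef' : Fintype.card V - 2 - mH ≤ t := by
    have : deficiency H = Fintype.card ((⊤ : G.Subgraph).deleteVerts {u, v}).verts - mH := rfl
    rw [this, hcardH] at hdef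
    exact hdef
  -- lift the matching
  have hMcoe : (Subgraph.coeSubgraph Mt).IsMatching := hMt.coeSubgraph
  have hMcoeverts : (Subgraph.coeSubgraph Mt).verts = Subtype.val '' Mt.verts :=
    Subgraph.verts_coeSubgraph Mt
  have hMcoecard : (Subgraph.coeSubgraph Mt).verts.ncard = mH := by
    rw [hMcoeverts, Set.ncard_image_of_injective _ Subtype.val_injective, hMtcard]
  have hu : u ∉ (Subgraph.coeSubgraph Mt).verts := by
    rw [hMcoeverts]
    rintro ⟨⟨a, ha⟩, -, heq⟩
    simp only at heq
    subst heq
    exact ((Set.mem_diff _).1 ha).2 (by simp)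
  have hv : v ∉ (Subgraph.coeSubgraph Mt).verts := by
    rw [hMcoeverts]
    rintro ⟨⟨a, ha⟩, -, heq⟩
    simp only at heq
    subst heq
    exact ((Set.mem_diff _).1 ha).2 (by simp)
  obtain ⟨M', hM', hMv⟩ := matching_extend hMcoe huv hu hv
  have hdefG := deficiency_le_of_matching M' hM'
  rw [hMv, ncard_matching_extend huv.ne hu hv, hMcoecard] at hdefG
  -- arithmetic
  have hmHle : mH ≤ Fintype.card V - 2 := by
    have := le_csSup (mset_bddAbove H) (⟨Mt, hMt, hMtcard⟩ : mH ∈ MSet H)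
    -- bound mH by card of H
    have hb : ∀ k ∈ MSet H, k ≤ Fintype.card V - 2 := by
      intro k hk
      obtain ⟨M, -, rfl⟩ := hk
      calc M.verts.ncard ≤ (Set.univ : Set _).ncard :=
            Set.ncard_le_ncard (Set.subset_univ _) (Set.toFinite _)
        _ = Fintype.card V - 2 := by
            rw [Set.ncard_univ, ← hcardH, Nat.card_eq_fintype_card]
    exact hb mH ⟨Mt, hMt, hMtcard⟩
  omega

lemma bgraph_adj_ll (n : ℕ) (i j : Fin (n+2)) :
    (Bgraph n).Adj (Sum.inl (Sum.inl i)) (Sum.inl (Sum.inl j)) ↔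
      ((i : ℕ) ≠ (j : ℕ) ∧ ((i : ℕ) + 1 = (j : ℕ) ∨ (j : ℕ) + 1 = (i : ℕ))) := by
  simp only [Bgraph, Tgraph, fromRel_adj, ne_eq, Sum.inl.injEq]
  constructor
  · rintro ⟨h1, h⟩
    refine ⟨fun he => h1 (Fin.ext he), ?_⟩
    rcases h with ⟨-, h⟩ | ⟨-, h⟩ <;> tauto
  · rintro ⟨h1, h⟩
    exact ⟨fun he => h1 (by rw [he]), by tauto⟩

lemma bgraph_adj_lr (n : ℕ) (i : Fin (n+2)) (t : Fin 2) :
    (Bgraph n).Adj (Sum.inl (Sum.inl i)) (Sum.inl (Sum.inr t)) ↔ (i : ℕ) = n + 1 := by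
  simp [Bgraph, Tgraph, fromRel_adj]

lemma bgraph_adj_lo (n : ℕ) (i : Fin (n+2)) (t : Fin 2) :
    (Bgraph n).Adj (Sum.inl (Sum.inl i)) (Sum.inr t) ↔ (i : ℕ) = 0 := by
  simp [Bgraph, Tgraph, fromRel_adj, isTEnd]

lemma bgraph_not_adj_rr (n : ℕ) (s t : Fin 2) :
    ¬ (Bgraph n).Adj (Sum.inl (Sum.inr s)) (Sum.inl (Sum.inr t)) := by
  simp [Bgraph, Tgraph, fromRel_adj, isTEnd]

lemma bgraph_not_adj_ro (n : ℕ) (s t : Fin 2) :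
    ¬ (Bgraph n).Adj (Sum.inl (Sum.inr s)) (Sum.inr t) := by
  simp [Bgraph, Tgraph, fromRel_adj, isTEnd]

lemma bgraph_not_adj_oo (n : ℕ) (s t : Fin 2) :
    ¬ (Bgraph n).Adj (Sum.inr s) (Sum.inr t) := by
  simp [Bgraph, Tgraph, fromRel_adj, isTEnd]

lemma ite_pair_inj {α : Type*} {x y : α} (hxy : x ≠ y) {t t' : Fin 2}
    (h : (if t = 0 then x else y) = (if t' = 0 then x else y)) : t = t' := by
  fin_cases t <;> fin_cases t' <;> simp_all

lemma dist_getVert_le (hconn : G.Connected) {a b : V} (w : G.Walk a b) :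
    ∀ i : ℕ, G.dist a (w.getVert i) ≤ i := by
  induction w with
  | nil =>
    intro i
    exact le_trans (le_of_eq SimpleGraph.dist_self) (Nat.zero_le _)
  | @cons a c b hadj p ih =>
    intro i
    cases i with
    | zero => simp [Walk.getVert_zero, SimpleGraph.dist_self]
    | succ k =>
      rw [Walk.getVert_cons_succ]
      have h1 := hconn.dist_triangle (u := a) (v := c) (w := p.getVert k)
      have h2 : G.dist a c ≤ 1 := by
        have := SimpleGraph.dist_le (Walk.cons hadj Walk.nil : G.Walk a c)
        simpa using this
      have h3 := ih k
      -- but ih is about dist c (p.getVert k)? careful: ih : ∀ i, G.dist c (p.getVert i) ≤ i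
      omega

lemma getVert_dist_le {a b : V} (w : G.Walk a b) :
    ∀ i : ℕ, G.dist (w.getVert i) b ≤ w.length - i := by
  induction w with
  | nil =>
    intro i
    exact le_trans (le_of_eq SimpleGraph.dist_self) (Nat.zero_le _)
  | @cons a c b hadj p ih =>
    intro i
    cases i with
    | zero =>
      rw [Walk.getVert_zero]
      have := SimpleGraph.dist_le (Walk.cons hadj p)
      simpa using this
    | succ k =>
      rw [Walk.getVert_cons_succ]
      have := ih k
      have hl : (Walk.cons hadj p).length = p.length + 1 := by simp
      omega

lemma pendant_pair_bgraph (hconn : G.Connected) {u₁ u₂ w₁ w₂ w₁' w₂' : V}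
    (h12 : u₁ ≠ u₂)
    (ha1 : G.Adj u₁ w₁) (ha2 : G.Adj u₁ w₂) (hww : w₁ ≠ w₂)
    (hp1 : ∀ x, G.Adj w₁ x → x = u₁) (hp2 : ∀ x, G.Adj w₂ x → x = u₁)
    (ha1' : G.Adj u₂ w₁') (ha2' : G.Adj u₂ w₂') (hww' : w₁' ≠ w₂')
    (hp1' : ∀ x, G.Adj w₁' x → x = u₂) (hp2' : ∀ x, G.Adj w₂' x → x = u₂) :
    ∃ i : ℕ, Nonempty (Bgraph i ↪g G) := by
  classical
  obtain ⟨W, hW⟩ := hconn.exists_walk_length_eq_dist u₁ u₂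
  set L := G.dist u₁ u₂ with hLdef
  have hL1 : 1 ≤ L := hconn.pos_dist_of_ne h12
  set q : ℕ → V := W.getVert with hq
  have q0 : q 0 = u₁ := Walk.getVert_zero W
  have qL : q L = u₂ := by
    rw [hq, ← hW]; exact Walk.getVert_length W
  have hd1 : ∀ i, i ≤ L → G.dist u₁ (q i) = i ∧ G.dist (q i) u₂ = L - i := by
    intro i hi
    have h1 := dist_getVert_le hconn W i
    have h2 := getVert_dist_le W i
    rw [hW] at h2
    rw [← hq] at h1 h2
    have h3 := hconn.dist_triangle (u := u₁) (v := q i) (w := u₂)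
    rw [← hLdef] at h3
    constructor <;> omega
  have hinj : ∀ i, i ≤ L → ∀ j, j ≤ L → q i = q j → i = j := by
    intro i hi j hj hq
    have h1 := (hd1 i hi).1
    have h2 := (hd1 j hj).1
    rw [hq] at h1
    omega
  have hadjq : ∀ i, i < L → G.Adj (q i) (q (i + 1)) := by
    intro i hi
    exact W.adj_getVert_succ (by omega)
  have hchord : ∀ i, i ≤ L → ∀ j, j ≤ L → G.Adj (q i) (q j) →
      (j = i + 1 ∨ i = j + 1) := by
    intro i hi j hj hadj
    have hne : i ≠ j := fun h => (h ▸ hadj).ne rfl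
    have hdij : G.dist (q i) (q j) ≤ 1 := by
      have := SimpleGraph.dist_le (Walk.cons hadj Walk.nil : G.Walk (q i) (q j))
      simpa using this
    have t1 := hconn.dist_triangle (u := u₁) (v := q i) (w := q j)
    have t2 := hconn.dist_triangle (u := q i) (v := q j) (w := u₂)
    have t3 := hconn.dist_triangle (u := u₁) (v := q j) (w := q i)
    have t4 := hconn.dist_triangle (u := q j) (v := q i) (w := u₂)
    have hdji : G.dist (q j) (q i) ≤ 1 := by rw [SimpleGraph.dist_comm]; exact hdij
    have e1 := (hd1 i hi).1
    have e2 := (hd1 i hi).2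
    have e3 := (hd1 j hj).1
    have e4 := (hd1 j hj).2
    have dtot : G.dist u₁ u₂ = L := rfl
    omega
  -- pendant vertices are not on the path
  have key1 : ∀ w, G.Adj u₁ w → (∀ x, G.Adj w x → x = u₁) → ∀ i, i ≤ L → q i ≠ w := by
    intro w haw hpw i hiL heq
    cases i with
    | zero =>
      rw [q0] at heq
      exact haw.ne heq
    | succ k =>
      have h1 : G.Adj (q k) (q (k + 1)) := hadjq k (by omega)
      rw [heq] at h1
      have h2 : q k = u₁ := hpw _ h1.symm
      have h3 : k = 0 := by
        have := hinj k (by omega) 0 (by omega) (by rw [h2, q0])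
        omega
      subst h3
      simp only [Nat.zero_add] at heq
      by_cases hL2 : 2 ≤ L
      · have h4 : G.Adj (q 1) (q 2) := hadjq 1 (by omega)
        rw [heq] at h4
        have h5 : q 2 = u₁ := hpw _ h4
        have := hinj 2 (by omega) 0 (by omega) (by rw [h5, q0])
        omega
      · have hLeq : L = 1 := by omega
        have h6 : q 1 = u₂ := by rw [← hLeq]; exact qL
        rw [heq] at h6
        have e1 := ha1'
        have e2 := ha2'
        rw [← h6] at e1 e2
        exact hww' ((hpw _ e1).trans (hpw _ e2).symm)
  have key2 : ∀ w, G.Adj u₂ w → (∀ x, G.Adj w x → x = u₂) → ∀ i, i ≤ L → q i ≠ w := by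
    intro w haw hpw i hiL heq
    by_cases hiL' : i = L
    · subst hiL'
      rw [qL] at heq
      exact haw.ne heq
    · have h1 : G.Adj (q i) (q (i + 1)) := hadjq i (by omega)
      rw [heq] at h1
      have h2 : q (i + 1) = u₂ := hpw _ h1
      have h3 : i + 1 = L := hinj (i+1) (by omega) L (by omega) (by rw [h2, qL])
      by_cases hi1 : 1 ≤ i
      · have h4 : G.Adj (q (i - 1)) (q i) := by
          have := hadjq (i - 1) (by omega)
          have heq2 : i - 1 + 1 = i := by omega
          rwa [heq2] at this
        rw [heq] at h4
        have h5 : q (i - 1) = u₂ := hpw _ h4.symm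
        have := hinj (i - 1) (by omega) L (by omega) (by rw [h5, qL])
        omega
      · have hieq : i = 0 := by omega
        subst hieq
        rw [q0] at heq
        have e1 := ha1
        have e2 := ha2
        rw [heq] at e1 e2
        exact hww ((hpw _ e1).trans (hpw _ e2).symm)
  have hcross : ∀ w w', G.Adj u₁ w → (∀ x, G.Adj w' x → x = u₂) → w ≠ w' := by
    intro w w' haw hpw' heq
    subst heq
    exact h12 (hpw' _ haw.symm)
  -- the embedding
  set n := L - 1 with hn
  have hLn : L = n + 1 := by omega
  set f : (Fin (n + 2) ⊕ Fin 2) ⊕ Fin 2 → V :=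
    Sum.elim (Sum.elim (fun i : Fin (n+2) => q (i : ℕ))
      (fun t : Fin 2 => if t = 0 then w₁' else w₂'))
      (fun t : Fin 2 => if t = 0 then w₁ else w₂) with hfdef
  have hfin : ∀ i : Fin (n + 2), (i : ℕ) ≤ L := fun i => by
    have := i.isLt; omega
  -- facts about the if-then-else pendants
  have hup : ∀ t : Fin 2, G.Adj u₂ (if t = 0 then w₁' else w₂') := by
    intro t; split <;> assumption
  have hupp : ∀ t : Fin 2, ∀ x, G.Adj (if t = 0 then w₁' else w₂') x → x = u₂ := by
    intro t; split <;> assumption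
  have hlp : ∀ t : Fin 2, G.Adj u₁ (if t = 0 then w₁ else w₂) := by
    intro t; split <;> assumption
  have hlpp : ∀ t : Fin 2, ∀ x, G.Adj (if t = 0 then w₁ else w₂) x → x = u₁ := by
    intro t; split <;> assumption
  refine ⟨n, ⟨⟨⟨f, ?_⟩, ?_⟩⟩⟩
  · -- injectivity
    intro a b hab
    simp only [hfdef, Sum.elim_inl, Sum.elim_inr] at hab
    match a, b, hab with
    | Sum.inl (Sum.inl i), Sum.inl (Sum.inl j), hab =>
      simp only [Sum.elim_inl, Sum.elim_inr] at hab
      have := hinj i (hfin i) j (hfin j) hab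
      exact congrArg _ (congrArg _ (Fin.ext this))
    | Sum.inl (Sum.inl i), Sum.inl (Sum.inr t), hab =>
      simp only [Sum.elim_inl, Sum.elim_inr] at hab
      exact absurd hab (key2 _ (hup t) (hupp t) i (hfin i))
    | Sum.inl (Sum.inl i), Sum.inr t, hab =>
      simp only [Sum.elim_inl, Sum.elim_inr] at hab
      exact absurd hab (key1 _ (hlp t) (hlpp t) i (hfin i))
    | Sum.inl (Sum.inr t), Sum.inl (Sum.inl i), hab =>
      simp only [Sum.elim_inl, Sum.elim_inr] at hab
      exact absurd hab.symm (key2 _ (hup t) (hupp t) i (hfin i))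
    | Sum.inl (Sum.inr t), Sum.inl (Sum.inr t'), hab =>
      simp only [Sum.elim_inl, Sum.elim_inr] at hab
      exact congrArg _ (congrArg _ (ite_pair_inj hww' hab))
    | Sum.inl (Sum.inr t), Sum.inr t', hab =>
      simp only [Sum.elim_inl, Sum.elim_inr] at hab
      exact absurd hab.symm (hcross _ _ (hlp t') (hupp t))
    | Sum.inr t, Sum.inl (Sum.inl i), hab =>
      simp only [Sum.elim_inl, Sum.elim_inr] at hab
      exact absurd hab.symm (key1 _ (hlp t) (hlpp t) i (hfin i))
    | Sum.inr t, Sum.inl (Sum.inr t'), hab =>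
      simp only [Sum.elim_inl, Sum.elim_inr] at hab
      exact absurd hab (hcross _ _ (hlp t) (hupp t'))
    | Sum.inr t, Sum.inr t', hab =>
      simp only [Sum.elim_inl, Sum.elim_inr] at hab
      exact congrArg _ (ite_pair_inj hww hab)
  · -- adjacency iff
    intro a b
    simp only [Function.Embedding.coeFn_mk, hfdef]
    match a, b with
    | Sum.inl (Sum.inl i), Sum.inl (Sum.inl j) =>
      try simp only [Sum.elim_inl, Sum.elim_inr]
      rw [bgraph_adj_ll]
      constructor
      · intro h
        have hij := hchord i (hfin i) j (hfin j) h
        have hne : (i : ℕ) ≠ (j : ℕ) := by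
          intro he
          rw [show (i : Fin (n+2)) = j from Fin.ext he] at h
          exact h.ne rfl
        exact ⟨fun he => hne (by rw [he]), by omega⟩
      · rintro ⟨hne, hij | hij⟩
        · have := hadjq i (by omega)
          rwa [show (i : ℕ) + 1 = (j : ℕ) from hij] at this
        · have := hadjq j (by omega)
          rw [show (j : ℕ) + 1 = (i : ℕ) from hij] at this
          exact this.symm
    | Sum.inl (Sum.inl i), Sum.inl (Sum.inr t) =>
      try simp only [Sum.elim_inl, Sum.elim_inr]
      rw [bgraph_adj_lr]
      constructor
      · intro h
        have h2 : q i = u₂ := hupp t _ h.symm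
        have := hinj i (hfin i) L (by omega) (by rw [h2, qL])
        omega
      · intro h
        have : q i = u₂ := by
          have : (i : ℕ) = L := by omega
          rw [this, qL]
        rw [this]
        exact hup t
    | Sum.inl (Sum.inl i), Sum.inr t =>
      try simp only [Sum.elim_inl, Sum.elim_inr]
      rw [bgraph_adj_lo]
      constructor
      · intro h
        have h2 : q i = u₁ := hlpp t _ h.symm
        have := hinj i (hfin i) 0 (by omega) (by rw [h2, q0])
        omega
      · intro h
        have : q i = u₁ := by rw [show (i:ℕ) = 0 from h, q0]
        rw [this]
        exact hlp t
    | Sum.inl (Sum.inr t), Sum.inl (Sum.inl i) =>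
      try simp only [Sum.elim_inl, Sum.elim_inr]
      rw [G.adj_comm, (Bgraph n).adj_comm, bgraph_adj_lr]
      constructor
      · intro h
        have h2 : q i = u₂ := hupp t _ h.symm
        have := hinj i (hfin i) L (by omega) (by rw [h2, qL])
        omega
      · intro h
        have : q i = u₂ := by
          have : (i : ℕ) = L := by omega
          rw [this, qL]
        rw [this]
        exact hup t
    | Sum.inl (Sum.inr t), Sum.inl (Sum.inr t') =>
      try simp only [Sum.elim_inl, Sum.elim_inr]
      rw [iff_false_intro (bgraph_not_adj_rr n t t')]
      simp only [iff_false]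
      intro h
      exact (hup t').ne (hupp t _ h).symm
    | Sum.inl (Sum.inr t), Sum.inr t' =>
      try simp only [Sum.elim_inl, Sum.elim_inr]
      rw [iff_false_intro (bgraph_not_adj_ro n t t')]
      simp only [iff_false]
      intro h
      have h2 : (if t' = 0 then w₁ else w₂) = u₂ := hupp t _ h
      have e1 := ha1'
      have e2 := ha2'
      rw [← h2] at e1 e2
      exact hww' ((hlpp t' _ e1).trans (hlpp t' _ e2).symm)
    | Sum.inr t, Sum.inl (Sum.inl i) =>
      try simp only [Sum.elim_inl, Sum.elim_inr]
      rw [G.adj_comm, (Bgraph n).adj_comm, bgraph_adj_lo]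
      constructor
      · intro h
        have h2 : q i = u₁ := hlpp t _ h.symm
        have := hinj i (hfin i) 0 (by omega) (by rw [h2, q0])
        omega
      · intro h
        have : q i = u₁ := by rw [show (i:ℕ) = 0 from h, q0]
        rw [this]
        exact hlp t
    | Sum.inr t, Sum.inl (Sum.inr t') =>
      try simp only [Sum.elim_inl, Sum.elim_inr]
      rw [G.adj_comm, (Bgraph n).adj_comm, iff_false_intro (bgraph_not_adj_ro n t' t)]
      simp only [iff_false]
      intro h
      have h2 : (if t = 0 then w₁ else w₂) = u₂ := hupp t' _ h
      have e1 := ha1'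
      have e2 := ha2'
      rw [← h2] at e1 e2
      exact hww' ((hlpp t _ e1).trans (hlpp t _ e2).symm)
    | Sum.inr t, Sum.inr t' =>
      try simp only [Sum.elim_inl, Sum.elim_inr]
      rw [iff_false_intro (bgraph_not_adj_oo n t t')]
      simp only [iff_false]
      intro h
      exact (hlp t').ne (hlpp t _ h).symm

lemma round_pendant (hconn : G.Connected)
    (hF2 : ∀ a b : V, G.Adj a b → ∃ x y : V, x ∉ ({a, b} : Set V) ∧ y ∉ ({a, b} : Set V) ∧
      ¬ Avoid G {a, b} x y)
    {r : V} {d : ℕ} (hecc : ∀ w, G.dist r w ≤ d) (hd2 : 2 ≤ d)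
    {u : V} (hu : G.dist r u = d - 1)
    {y : V} (hy : G.dist r y = d) (hadjuy : G.Adj u y) :
    ∃ k, k ≠ y ∧ k ≠ u ∧ G.Adj u k ∧ G.dist r k = d ∧ (∀ m, G.Adj k m → m = u) := by
  classical
  set S₀ : Set V := {u, y} with hS₀
  set NR : Set V := {x | x ∉ S₀ ∧ ¬ Avoid G S₀ r x} with hNR
  have hmemS : ∀ z ∈ S₀, z = u ∨ z = y := by
    intro z hz
    rcases hz with rfl | hz
    · exact Or.inl rfl
    · simp only [Set.mem_singleton_iff] at hz; exact Or.inr hz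
  have hdS : ∀ z ∈ S₀, d - 1 ≤ G.dist r z := by
    intro z hz
    rcases hmemS z hz with rfl | rfl <;> omega
  -- NR is nonempty
  have hNRne : ∃ k, k ∈ NR := by
    obtain ⟨a, b, ha, hb, hnav⟩ := hF2 u y hadjuy
    by_cases hAa : Avoid G S₀ r a
    · by_cases hAb : Avoid G S₀ r b
      · exact absurd (hAa.symm.trans hAb) hnav
      · exact ⟨b, hb, hAb⟩
    · exact ⟨a, ha, hAa⟩
  -- distances
  have N1 : ∀ k ∈ NR, G.dist r k = d := by
    intro k hk
    obtain ⟨hkS, hkA⟩ := hk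
    by_contra hne
    have hlt : G.dist r k ≤ d - 1 := by
      have := hecc k
      omega
    exact hkA (geoAvoid hconn _ rfl hkS (fun z hz => le_trans hlt (hdS z hz)))
  have N2 : ∀ k ∈ NR, G.Adj u k := by
    intro k hk
    obtain ⟨hkS, hkA⟩ := hk
    have hdk : G.dist r k = (d - 1) + 1 := by rw [N1 k ⟨hkS, hkA⟩]; omega
    obtain ⟨p, hpk, hpd⟩ := exists_pred hconn hdk
    by_cases hpu : p = u
    · rwa [hpu] at hpk
    · exfalso
      have hpS : p ∉ S₀ := by
        intro hmem
        rcases hmemS p hmem with rfl | rfl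
        · exact hpu rfl
        · omega
      have hAp : Avoid G S₀ r p :=
        geoAvoid hconn _ rfl hpS (fun z hz => le_trans (le_of_eq hpd) (hdS z hz))
      exact hkA (hAp.step hpk hkS)
  have Nclosed : ∀ k ∈ NR, ∀ m, G.Adj k m → m ∈ S₀ ∨ m ∈ NR := by
    intro k hk m hadj
    by_cases hmS : m ∈ S₀
    · exact Or.inl hmS
    · refine Or.inr ⟨hmS, fun hAm => ?_⟩
      exact hk.2 (hAm.step hadj.symm hk.1)
  have huS : ∀ {k m : V}, k ∈ NR → (m ∈ NR ∨ m = y) → u ∉ ({k, m} : Set V) := by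
    intro k m hk hm hmem
    rcases hmem with rfl | hmem
    · exact hk.1 (by simp [hS₀])
    · simp only [Set.mem_singleton_iff] at hmem
      subst hmem
      rcases hm with hm | rfl
      · exact hm.1 (by simp [hS₀])
      · exact hadjuy.ne rfl
  have avoidAll : ∀ k ∈ NR, ∀ m, (m ∈ NR ∨ m = y) → k ≠ m →
      ∀ w, w ∉ ({k, m} : Set V) → Avoid G {k, m} r w := by
    intro k hk m hm hkm w hw
    have hdk : G.dist r k = d := N1 k hk
    have hdm : G.dist r m = d := by
      rcases hm with hm | rfl
      · exact N1 m hm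
      · exact hy
    have hukm : u ∉ ({k, m} : Set V) := huS hk hm
    have hAu : Avoid G {k, m} r u := by
      refine geoAvoid hconn _ rfl hukm (fun z hz => ?_)
      rcases hz with rfl | hz
      · omega
      · simp only [Set.mem_singleton_iff] at hz; subst hz; omega
    by_cases hAw : Avoid G S₀ r w
    · obtain ⟨wk, hwk⟩ := hAw
      refine ⟨wk, fun z hz hzmem => ?_⟩
      have hzA : Avoid G S₀ r z := ⟨wk.takeUntil z hz, fun p hp =>
        hwk p (Walk.support_takeUntil_subset _ hz hp)⟩
      rcases hzmem with rfl | hzmem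
      · exact hk.2 hzA
      · simp only [Set.mem_singleton_iff] at hzmem
        subst hzmem
        rcases hm with hm | rfl
        · exact hm.2 hzA
        · exact hwk z hz (by simp [hS₀])
    · by_cases hwS : w ∈ S₀
      · rcases hmemS w hwS with rfl | rfl
        · exact hAu
        · have hyk : w ∉ ({k, m} : Set V) := hw
          exact hAu.step hadjuy hw
      · have hwNR : w ∈ NR := ⟨hwS, hAw⟩
        exact hAu.step (N2 w hwNR) hw
  have noEdge : ∀ k ∈ NR, ∀ m, (m ∈ NR ∨ m = y) → k ≠ m → ¬ G.Adj k m := by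
    intro k hk m hm hkm hadj
    obtain ⟨a, b, ha, hb, hnav⟩ := hF2 k m hadj
    exact hnav ((avoidAll k hk m hm hkm a ha).symm.trans (avoidAll k hk m hm hkm b hb))
  obtain ⟨k, hk⟩ := hNRne
  have hkS := hk.1
  have hku : k ≠ u := fun h => hkS (by simp [hS₀, h])
  have hky : k ≠ y := fun h => hkS (by simp [hS₀, h])
  refine ⟨k, hky, hku, N2 k hk, N1 k hk, fun m hadj => ?_⟩
  rcases Nclosed k hk m hadj with hmS | hmNR
  · rcases hmemS m hmS with rfl | rfl
    · rfl
    · exact absurd hadj (noEdge k hk m (Or.inr rfl) hadj.ne)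
  · exact absurd hadj (noEdge k hk m (Or.inl hmNR) hadj.ne)

lemma two_pendants (hconn : G.Connected)
    (hF2 : ∀ a b : V, G.Adj a b → ∃ x y : V, x ∉ ({a, b} : Set V) ∧ y ∉ ({a, b} : Set V) ∧
      ¬ Avoid G {a, b} x y)
    (hdom : ∀ z : V, ∃ w, w ≠ z ∧ ¬ G.Adj z w) (r : V) :
    ∃ u w₁ w₂ : V, u ≠ r ∧ w₁ ≠ w₂ ∧ G.Adj u w₁ ∧ G.Adj u w₂ ∧
      (∀ x, G.Adj w₁ x → x = u) ∧ (∀ x, G.Adj w₂ x → x = u) := by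
  classical
  haveI : Nonempty V := hconn.nonempty
  obtain ⟨v, -, hvmax⟩ := Finset.exists_max_image Finset.univ (G.dist r)
    Finset.univ_nonempty
  set d := G.dist r v with hd
  have hecc : ∀ w, G.dist r w ≤ d := fun w => hvmax w (Finset.mem_univ w)
  have hd2 : 2 ≤ d := by
    obtain ⟨w, hwr, hwa⟩ := hdom r
    have h0 : G.dist r w ≠ 0 := by
      rw [ne_eq, SimpleGraph.Connected.dist_eq_zero_iff hconn]
      exact fun h => hwr h.symm
    have h1 : G.dist r w ≠ 1 := by
      rw [ne_eq, SimpleGraph.dist_eq_one_iff_adj]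
      exact hwa
    have := hecc w
    omega
  have hdv : G.dist r v = (d - 1) + 1 := by omega
  obtain ⟨u, huv, hud⟩ := exists_pred hconn hdv
  have hur : u ≠ r := by
    intro h
    subst h
    rw [SimpleGraph.dist_self] at hud
    omega
  obtain ⟨k₁, hk₁v, hk₁u, hk₁adj, hk₁d, hk₁p⟩ :=
    round_pendant hconn hF2 hecc hd2 hud hd.symm huv
  obtain ⟨k₂, hk₂k₁, hk₂u, hk₂adj, hk₂d, hk₂p⟩ :=
    round_pendant hconn hF2 hecc hd2 hud hk₁d hk₁adj
  exact ⟨u, k₁, k₂, hur, fun h => hk₂k₁ h.symm, hk₁adj, hk₂adj, hk₁p, hk₂p⟩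

end DefAux

open DefAux in
theorem aux_main (s : ℕ) (hs : 4 ≤ s) :
    ∀ n : ℕ, ∀ (V : Type) [Fintype V] (G : SimpleGraph V), Fintype.card V = n →
      G.Connected →
      (¬ Nonempty (completeBipartiteGraph Unit (Fin s) ↪g G)) →
      (∀ i : ℕ, ¬ Nonempty (Bgraph i ↪g G)) →
      deficiency G ≤ s - 2 := by
  intro n
  induction n using Nat.strong_induction_on with
  | _ n ih =>
    intro V _ G hcard hconn hstar hB
    by_cases hdome : ∃ z : V, ∀ w, w ≠ z → G.Adj z w
    · obtain ⟨z, hz⟩ := hdome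
      exact dominating_case hs z hz hstar
    · push_neg at hdome
      have hdom : ∀ z : V, ∃ w, w ≠ z ∧ ¬ G.Adj z w := by
        intro z
        obtain ⟨w, hw1, hw2⟩ := hdome z
        exact ⟨w, hw1, fun h => hw2 h⟩
      by_cases h2 : ∃ u v : V, G.Adj u v ∧ ∀ a b : V, a ∉ ({u, v} : Set V) →
          b ∉ ({u, v} : Set V) → Avoid G {u, v} a b
      · -- reduction case
        obtain ⟨u, v, huv, hav⟩ := h2
        haveI : Fintype ((⊤ : G.Subgraph).deleteVerts {u, v}).verts := Fintype.ofFinite _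
        obtain ⟨w, hw1, hw2⟩ := hdom u
        have hwv : w ≠ v := by rintro rfl; exact hw2 huv
        have hwmem : w ∉ ({u, v} : Set V) := by
          intro hmem
          rcases hmem with rfl | hmem
          · exact hw1 rfl
          · simp only [Set.mem_singleton_iff] at hmem; exact hwv hmem
        have hwin : w ∈ ((⊤ : G.Subgraph).deleteVerts {u, v}).verts := by
          simp only [Subgraph.deleteVerts_verts, Subgraph.verts_top]
          exact ⟨Set.mem_univ _, hwmem⟩
        have hne : Nonempty ((⊤ : G.Subgraph).deleteVerts {u, v}).verts := ⟨⟨w, hwin⟩⟩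
        have hconn' := connected_del_of_avoid ({u, v} : Set V) hne hav
        have hcard' : Fintype.card ((⊤ : G.Subgraph).deleteVerts {u, v}).verts = n - 2 := by
          rw [← Nat.card_eq_fintype_card, card_del_pair huv.ne, hcard]
        have hn2 : 2 ≤ n := by
          rw [← hcard]
          have : Nontrivial V := ⟨u, v, huv.ne⟩
          exact Fintype.one_lt_card
        have hnpos : n - 2 < n := by omega
        have embdel := delEmbedding G ({u, v} : Set V)
        have hstar' : ¬ Nonempty (completeBipartiteGraph Unit (Fin s) ↪g
            ((⊤ : G.Subgraph).deleteVerts {u, v}).coe) :=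
          fun ⟨e⟩ => hstar ⟨embdel.comp e⟩
        have hB' : ∀ i : ℕ, ¬ Nonempty (Bgraph i ↪g
            ((⊤ : G.Subgraph).deleteVerts {u, v}).coe) :=
          fun i ⟨e⟩ => hB i ⟨embdel.comp e⟩
        have hdef' := ih (n - 2) hnpos _ ((⊤ : G.Subgraph).deleteVerts {u, v}).coe
          hcard' hconn' hstar' hB'
        exact reduce_two huv hdef'
      · -- case 3: impossible
        exfalso
        push_neg at h2
        have hF2 : ∀ a b : V, G.Adj a b → ∃ x y : V, x ∉ ({a, b} : Set V) ∧
            y ∉ ({a, b} : Set V) ∧ ¬ Avoid G {a, b} x y := fun a b hab => h2 a b hab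
        haveI : Nonempty V := hconn.nonempty
        obtain ⟨u₁, w₁, w₂, -, hww, ha1, ha2, hp1, hp2⟩ :=
          two_pendants hconn hF2 hdom (Classical.arbitrary V)
        obtain ⟨u₂, w₁', w₂', h21, hww', ha1', ha2', hp1', hp2'⟩ :=
          two_pendants hconn hF2 hdom u₁
        obtain ⟨i, ⟨emb⟩⟩ := pendant_pair_bgraph hconn (fun h => h21 h.symm)
          ha1 ha2 hww hp1 hp2 ha1' ha2' hww' hp1' hp2'
        exact hB i ⟨emb⟩


/-- Let `s ≥ 4` and let `G` be a connected graph with no induced `K_{1,s}` and no induced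
`Bᵢ` for any `i ≥ 0`. Then `def(G) ≤ s − 2`. -/
theorem deficiency_le_of_star_B_free (s : ℕ) (hs : 4 ≤ s)
    (V : Type) [Fintype V] (G : SimpleGraph V) (hconn : G.Connected)
    (hstar : ¬ Nonempty (_root_.starGraph s ↪g G))
    (hB : ∀ i : ℕ, ¬ Nonempty (Bgraph i ↪g G)) :
    deficiency G ≤ s - 2 :=
  aux_main s hs (Fintype.card V) V G rfl hconn hstar hB
end

section
/- For all positive integers n and p, the deficiency of K̃_n^p equals n if n(p+1) is even, and equals n + 1 otherwise. -/
open SimpleGraph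

namespace KtildeAux

abbrev Vt (n p : ℕ) := Fin n × (Fin p ⊕ Fin 2)

variable {n p : ℕ}

lemma card_Vt : Fintype.card (Vt n p) = n * (p + 2) := by
  simp [Fintype.card_prod, Fintype.card_sum]

lemma adj_path {i : Fin n} {j j' : Fin p} (h : (j:ℕ) + 1 = (j':ℕ)) :
    (Ktilde n p).Adj (i, Sum.inl j) (i, Sum.inl j') := by
  simp only [Ktilde, Tgraph, fromRel_adj, isTEnd, Prod.mk.injEq, ne_eq, Sum.inl.injEq,
    Fin.ext_iff, Prod.ext_iff]
  exact ⟨by omega, Or.inl (Or.inl ⟨trivial, by omega, Or.inl h⟩)⟩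

lemma adj_branch {i : Fin n} {j : Fin p} (hj : (j:ℕ) = p - 1) (l : Fin 2) :
    (Ktilde n p).Adj (i, Sum.inl j) (i, Sum.inr l) := by
  simp only [Ktilde, Tgraph, fromRel_adj, isTEnd, Prod.mk.injEq, ne_eq, Fin.ext_iff,
    Prod.ext_iff]
  exact ⟨by simp, Or.inl (Or.inl ⟨trivial, by simp, Or.inl hj⟩)⟩

lemma adj_root {i i' : Fin n} (h : (i:ℕ) ≠ (i':ℕ)) {j j' : Fin p}
    (hj : (j:ℕ) = 0) (hj' : (j':ℕ) = 0) :
    (Ktilde n p).Adj (i, Sum.inl j) (i', Sum.inl j') := by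
  simp only [Ktilde, Tgraph, fromRel_adj, isTEnd, Prod.mk.injEq, ne_eq, Sum.inl.injEq,
    Fin.ext_iff, Prod.ext_iff]
  exact ⟨fun hc => h hc.1, Or.inl (Or.inr ⟨h, hj, hj'⟩)⟩

lemma adj_leaf {i : Fin n} {l : Fin 2} {w : Vt n p} (h : (Ktilde n p).Adj (i, Sum.inr l) w) :
    ∃ j : Fin p, w = (i, Sum.inl j) ∧ (j:ℕ) = p - 1 := by
  obtain ⟨i', x⟩ := w
  cases x with
  | inl k =>
    simp only [Ktilde, Tgraph, fromRel_adj, isTEnd, Prod.mk.injEq, ne_eq,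
      Fin.ext_iff, Prod.ext_iff] at h
    have hik : (i:ℕ) = (i':ℕ) ∧ (k:ℕ) = p - 1 := by tauto
    exact ⟨k, by simp [Prod.ext_iff, Fin.ext_iff]; omega, hik.2⟩
  | inr l' =>
    simp only [Ktilde, Tgraph, fromRel_adj, isTEnd, Prod.mk.injEq, ne_eq,
      Fin.ext_iff, Prod.ext_iff, Sum.inr.injEq] at h
    tauto

end KtildeAux
namespace KtildeAux

variable {n p : ℕ}

lemma exists_matching_of_pairing {V : Type*} (G : SimpleGraph V) (S : Set V) (f : V → V)
    (hmem : ∀ v ∈ S, f v ∈ S) (hinv : ∀ v ∈ S, f (f v) = v)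
    (hadj : ∀ v ∈ S, G.Adj v (f v)) :
    ∃ M : G.Subgraph, M.IsMatching ∧ M.verts = S := by
  refine ⟨⟨S, fun a b => (a ∈ S ∧ f a = b) ∨ (b ∈ S ∧ f b = a), ?_, ?_, ?_⟩, ?_, rfl⟩
  · rintro a b (⟨ha, rfl⟩ | ⟨hb, rfl⟩)
    · exact hadj a ha
    · exact (hadj b hb).symm
  · rintro a b (⟨ha, rfl⟩ | ⟨hb, rfl⟩)
    · exact ha
    · exact hmem b hb
  · refine ⟨?_⟩
    rintro a b (⟨ha, rfl⟩ | ⟨hb, rfl⟩)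
    · exact Or.inr ⟨ha, rfl⟩
    · exact Or.inl ⟨hb, rfl⟩
  · intro v hv
    refine ⟨f v, Or.inl ⟨hv, rfl⟩, ?_⟩
    rintro y (⟨-, h⟩ | ⟨hy, hfy⟩)
    · exact h.symm
    · subst hfy; exact (hinv y hy).symm

lemma sSup_matching_eq {V : Type*} [Fintype V] {G : SimpleGraph V} {t : ℕ}
    (hex : ∃ M : G.Subgraph, M.IsMatching ∧ M.verts.ncard = t)
    (hub : ∀ M : G.Subgraph, M.IsMatching → M.verts.ncard ≤ t) :
    sSup {k : ℕ | ∃ M : G.Subgraph, M.IsMatching ∧ M.verts.ncard = k} = t := by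
  apply le_antisymm
  · apply csSup_le ⟨t, hex⟩
    rintro k ⟨M, hM, rfl⟩; exact hub M hM
  · exact le_csSup ⟨t, by rintro k ⟨M, hM, rfl⟩; exact hub M hM⟩ hex

lemma ncard_even {V : Type*} [Fintype V] {G : SimpleGraph V} {M : G.Subgraph}
    (hM : M.IsMatching) : Even M.verts.ncard := by
  haveI : Fintype M.verts := Fintype.ofFinite _
  rw [Set.ncard_eq_toFinset_card']
  exact hM.even_card

lemma matching_card_le (hp : 0 < p) {M : (Ktilde n p).Subgraph} (hM : M.IsMatching) :
    M.verts.ncard + n ≤ n * (p + 2) := by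
  have key : ∀ i : Fin n, ∃ l : Fin 2, (i, Sum.inr l) ∉ M.verts := by
    intro i
    by_contra hc
    push_neg at hc
    obtain ⟨w0, hw0, -⟩ := hM (hc 0)
    obtain ⟨w1, hw1, -⟩ := hM (hc 1)
    obtain ⟨j0, rfl, hj0⟩ := adj_leaf (M.adj_sub hw0)
    obtain ⟨j1, rfl, hj1⟩ := adj_leaf (M.adj_sub hw1)
    have hjj : j1 = j0 := by rw [Fin.ext_iff]; omega
    rw [hjj] at hw1
    obtain ⟨w, -, huniq⟩ := hM (M.edge_vert hw0.symm)
    have h01 := (huniq _ hw0.symm).trans (huniq _ hw1.symm).symm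
    simp [Prod.ext_iff, Fin.ext_iff] at h01
  choose l hl using key
  set g : Fin n → Vt n p := fun i => (i, Sum.inr (l i)) with hg
  have hginj : Function.Injective g := by
    intro a b hab
    simpa using congrArg Prod.fst hab
  have hsub : Set.range g ⊆ M.vertsᶜ := by
    rintro - ⟨i, rfl⟩; exact hl i
  have h1 : (Set.range g).ncard = n := by
    rw [← Set.image_univ, Set.ncard_image_of_injective _ hginj, Set.ncard_univ,
      Nat.card_eq_fintype_card, Fintype.card_fin]
  have h2 : (Set.range g).ncard ≤ M.vertsᶜ.ncard :=
    Set.ncard_le_ncard hsub (Set.toFinite _)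
  have h3 := Set.ncard_add_ncard_compl M.verts (Set.toFinite _) (Set.toFinite _)
  rw [Nat.card_eq_fintype_card, card_Vt] at h3
  omega

end KtildeAux
namespace KtildeAux

variable {n p : ℕ}

/-- Partner function, case `p` odd: no root edges used. -/
def fA (n p : ℕ) (hp : 0 < p) : Vt n p → Vt n p
  | (i, Sum.inl j) =>
    if h1 : (j : ℕ) = p - 1 then (i, Sum.inr 0)
    else if h2 : (j : ℕ) % 2 = 0 then
      (i, Sum.inl ⟨(j:ℕ) + 1, by have := j.isLt; omega⟩)
    else (i, Sum.inl ⟨(j:ℕ) - 1, by have := j.isLt; omega⟩)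
  | (i, Sum.inr l) =>
    if l = (0 : Fin 2) then (i, Sum.inl ⟨p - 1, by omega⟩) else (i, Sum.inr l)

def SA (n p : ℕ) : Set (Vt n p) := {v | v.2 ≠ Sum.inr 1}

lemma ncard_SA : (SA n p).ncard = n * (p + 1) := by
  have hc : (SA n p)ᶜ = Set.range (fun i : Fin n => ((i, Sum.inr 1) : Vt n p)) := by
    ext ⟨i, x⟩
    simp only [SA, Set.mem_compl_iff, Set.mem_setOf_eq, not_not, Set.mem_range, Prod.mk.injEq]
    constructor
    · rintro rfl; exact ⟨i, rfl, rfl⟩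
    · rintro ⟨a, rfl, h⟩; exact h.symm
  have h1 : ((SA n p)ᶜ).ncard = n := by
    rw [hc, ← Set.image_univ, Set.ncard_image_of_injective _ (fun a b hab => by
      simpa using congrArg Prod.fst hab), Set.ncard_univ, Nat.card_eq_fintype_card,
      Fintype.card_fin]
  have h3 := Set.ncard_add_ncard_compl (SA n p) (Set.toFinite _) (Set.toFinite _)
  rw [Nat.card_eq_fintype_card, card_Vt] at h3
  have : n * (p + 2) = n * (p + 1) + n := by ring
  omega

lemma matchA (hp : p % 2 = 1) :
    ∃ M : (Ktilde n p).Subgraph, M.IsMatching ∧ M.verts.ncard = n * (p + 1) := by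
  have hp0 : 0 < p := by omega
  have hmem : ∀ v ∈ SA n p, fA n p hp0 v ∈ SA n p := by
    rintro ⟨i, x⟩ hv
    cases x with
    | inl j => simp only [fA]; split_ifs <;> simp [SA]
    | inr l =>
      fin_cases l
      · simp [fA, SA]
      · simp [SA] at hv
  have hinv : ∀ v ∈ SA n p, fA n p hp0 (fA n p hp0 v) = v := by
    rintro ⟨i, x⟩ hv
    cases x with
    | inl j =>
      have hjlt := j.isLt
      simp only [fA]
      split_ifs with h1 h2 <;>
      · simp only [fA]
        split_ifs <;> simp_all [Prod.ext_iff, Sum.inl.injEq, Fin.ext_iff] <;> omega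
    | inr l =>
      fin_cases l
      · simp [fA]
      · simp [SA] at hv
  have hadj : ∀ v ∈ SA n p, (Ktilde n p).Adj v (fA n p hp0 v) := by
    rintro ⟨i, x⟩ hv
    cases x with
    | inl j =>
      have hjlt := j.isLt
      simp only [fA]
      split_ifs with h1 h2
      · exact adj_branch h1 0
      · exact adj_path rfl
      · exact (adj_path (by simp; omega)).symm
    | inr l =>
      fin_cases l
      · simpa [fA] using (adj_branch (i := i) (j := ⟨p - 1, by omega⟩) rfl 0).symm
      · simp [SA] at hv
  obtain ⟨M, hM, hverts⟩ := exists_matching_of_pairing (Ktilde n p) (SA n p) (fA n p hp0)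
    hmem hinv hadj
  exact ⟨M, hM, by rw [hverts, ncard_SA]⟩

end KtildeAux
namespace KtildeAux

variable {n p : ℕ}

/-- Partner function, case `p` even, `n` even: roots paired across copies. -/
def fB (n p : ℕ) (hp0 : 0 < p) (hpe : p % 2 = 0) (hne : n % 2 = 0) : Vt n p → Vt n p
  | (i, Sum.inl j) =>
    if h0 : (j : ℕ) = 0 then
      if hi : (i : ℕ) % 2 = 0 then (⟨(i:ℕ) + 1, by have := i.isLt; omega⟩, Sum.inl j)
      else (⟨(i:ℕ) - 1, by have := i.isLt; omega⟩, Sum.inl j)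
    else if h1 : (j : ℕ) = p - 1 then (i, Sum.inr 0)
    else if h2 : (j : ℕ) % 2 = 1 then
      (i, Sum.inl ⟨(j:ℕ) + 1, by have := j.isLt; omega⟩)
    else (i, Sum.inl ⟨(j:ℕ) - 1, by have := j.isLt; omega⟩)
  | (i, Sum.inr l) =>
    if l = (0 : Fin 2) then (i, Sum.inl ⟨p - 1, by omega⟩) else (i, Sum.inr l)

lemma matchB (hpe : p % 2 = 0) (hp0 : 0 < p) (hne : n % 2 = 0) :
    ∃ M : (Ktilde n p).Subgraph, M.IsMatching ∧ M.verts.ncard = n * (p + 1) := by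
  have hp1 : p - 1 ≠ 0 := by omega
  have hmem : ∀ v ∈ SA n p, fB n p hp0 hpe hne v ∈ SA n p := by
    rintro ⟨i, x⟩ hv
    cases x with
    | inl j => simp only [fB]; split_ifs <;> simp [SA]
    | inr l =>
      fin_cases l
      · simp [fB, SA]
      · simp [SA] at hv
  have hinv : ∀ v ∈ SA n p, fB n p hp0 hpe hne (fB n p hp0 hpe hne v) = v := by
    rintro ⟨i, x⟩ hv
    cases x with
    | inl j =>
      have hjlt := j.isLt
      have hilt := i.isLt
      simp only [fB]
      split_ifs with h0 hi h1 h2 <;>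
      · simp only [fB]
        split_ifs <;> simp_all [Prod.ext_iff, Sum.inl.injEq, Fin.ext_iff] <;> omega
    | inr l =>
      fin_cases l
      · simp [fB, hp1]
      · simp [SA] at hv
  have hadj : ∀ v ∈ SA n p, (Ktilde n p).Adj v (fB n p hp0 hpe hne v) := by
    rintro ⟨i, x⟩ hv
    cases x with
    | inl j =>
      have hjlt := j.isLt
      have hilt := i.isLt
      simp only [fB]
      split_ifs with h0 hi h1 h2
      · exact adj_root (by show (i:ℕ) ≠ (i:ℕ) + 1; omega) h0 h0
      · exact adj_root (by show (i:ℕ) ≠ (i:ℕ) - 1; omega) h0 h0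
      · exact adj_branch h1 0
      · exact adj_path rfl
      · exact (adj_path (by show (j:ℕ) - 1 + 1 = (j:ℕ); omega)).symm
    | inr l =>
      fin_cases l
      · simpa [fB] using (adj_branch (i := i) (j := ⟨p - 1, by omega⟩) rfl 0).symm
      · simp [SA] at hv
  obtain ⟨M, hM, hverts⟩ := exists_matching_of_pairing (Ktilde n p) (SA n p)
    (fB n p hp0 hpe hne) hmem hinv hadj
  exact ⟨M, hM, by rw [hverts, ncard_SA]⟩

/-- Partner function, case `p` even, `n` odd. -/
def fC (n p : ℕ) (hp0 : 0 < p) (hpe : p % 2 = 0) (hno : n % 2 = 1) : Vt n p → Vt n p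
  | (i, Sum.inl j) =>
    if hlast : (i : ℕ) = n - 1 then
      if h2 : (j : ℕ) % 2 = 0 then (i, Sum.inl ⟨(j:ℕ) + 1, by have := j.isLt; omega⟩)
      else (i, Sum.inl ⟨(j:ℕ) - 1, by have := j.isLt; omega⟩)
    else
      if h0 : (j : ℕ) = 0 then
        if hi : (i : ℕ) % 2 = 0 then (⟨(i:ℕ) + 1, by have := i.isLt; omega⟩, Sum.inl j)
        else (⟨(i:ℕ) - 1, by have := i.isLt; omega⟩, Sum.inl j)
      else if h1 : (j : ℕ) = p - 1 then (i, Sum.inr 0)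
      else if h2 : (j : ℕ) % 2 = 1 then
        (i, Sum.inl ⟨(j:ℕ) + 1, by have := j.isLt; omega⟩)
      else (i, Sum.inl ⟨(j:ℕ) - 1, by have := j.isLt; omega⟩)
  | (i, Sum.inr l) =>
    if l = (0 : Fin 2) then
      if (i : ℕ) = n - 1 then (i, Sum.inr l) else (i, Sum.inl ⟨p - 1, by omega⟩)
    else (i, Sum.inr l)

def SC (n p : ℕ) : Set (Vt n p) :=
  {v | v.2 ≠ Sum.inr 1 ∧ ¬((v.1 : ℕ) = n - 1 ∧ v.2 = Sum.inr 0)}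

lemma ncard_SC (hn : 0 < n) (hp0 : 0 < p) : (SC n p).ncard = n * (p + 1) - 1 := by
  have hc : (SC n p)ᶜ =
      insert ((⟨n - 1, by omega⟩ : Fin n), (Sum.inr 0 : Fin p ⊕ Fin 2))
        (Set.range (fun i : Fin n => ((i, Sum.inr 1) : Vt n p))) := by
    ext ⟨i, x⟩
    simp only [SC, Set.mem_compl_iff, Set.mem_setOf_eq, Set.mem_insert_iff, Set.mem_range,
      Prod.mk.injEq]
    rw [not_and_or, not_not, not_not]
    constructor
    · rintro (h | ⟨hi, rfl⟩)
      · exact Or.inr ⟨i, rfl, h.symm⟩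
      · exact Or.inl ⟨Fin.ext (by simp [hi]), rfl⟩
    · rintro (⟨hi, rfl⟩ | ⟨a, rfl, rfl⟩)
      · right; exact ⟨by rw [hi], rfl⟩
      · left; rfl
  have h1 : ((SC n p)ᶜ).ncard = n + 1 := by
    rw [hc, Set.ncard_insert_of_notMem (by simp), ← Set.image_univ,
      Set.ncard_image_of_injective _ (fun a b hab => by simpa using congrArg Prod.fst hab),
      Set.ncard_univ, Nat.card_eq_fintype_card, Fintype.card_fin]
  have h3 := Set.ncard_add_ncard_compl (SC n p) (Set.toFinite _) (Set.toFinite _)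
  rw [Nat.card_eq_fintype_card, card_Vt] at h3
  have h4 : n * (p + 2) = n * (p + 1) + n := by ring
  have h5 : 1 ≤ n * (p + 1) := Nat.one_le_iff_ne_zero.mpr (by positivity)
  omega

set_option maxHeartbeats 2000000 in
lemma matchC (hpe : p % 2 = 0) (hp0 : 0 < p) (hno : n % 2 = 1) :
    ∃ M : (Ktilde n p).Subgraph, M.IsMatching ∧ M.verts.ncard = n * (p + 1) - 1 := by
  have hp1 : p - 1 ≠ 0 := by omega
  have hmem : ∀ v ∈ SC n p, fC n p hp0 hpe hno v ∈ SC n p := by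
    rintro ⟨i, x⟩ hv
    cases x with
    | inl j => simp only [fC]; split_ifs <;> simp_all [SC] <;> omega
    | inr l =>
      fin_cases l
      · simp only [SC, Set.mem_setOf_eq] at hv
        have hine : (i : ℕ) ≠ n - 1 := fun h => hv.2 ⟨h, rfl⟩
        simp [fC, hine, SC]
      · simp [SC] at hv
  have hinv : ∀ v ∈ SC n p, fC n p hp0 hpe hno (fC n p hp0 hpe hno v) = v := by
    rintro ⟨i, x⟩ hv
    cases x with
    | inl j =>
      have hjlt := j.isLt
      have hilt := i.isLt
      simp only [fC]
      split_ifs with hlast h2 h0 hi h1 h2' <;>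
      · simp only [fC]
        split_ifs <;> simp_all [Prod.ext_iff, Sum.inl.injEq, Fin.ext_iff] <;> omega
    | inr l =>
      fin_cases l
      · simp only [SC, Set.mem_setOf_eq] at hv
        have hine : (i : ℕ) ≠ n - 1 := fun h => hv.2 ⟨h, rfl⟩
        simp [fC, hine, hp1]
      · simp [SC] at hv
  have hadj : ∀ v ∈ SC n p, (Ktilde n p).Adj v (fC n p hp0 hpe hno v) := by
    rintro ⟨i, x⟩ hv
    cases x with
    | inl j =>
      have hjlt := j.isLt
      have hilt := i.isLt
      simp only [fC]
      split_ifs with hlast h2 h0 hi h1 h2'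
      · exact adj_path rfl
      · exact (adj_path (by show (j:ℕ) - 1 + 1 = (j:ℕ); omega)).symm
      · exact adj_root (by show (i:ℕ) ≠ (i:ℕ) + 1; omega) h0 h0
      · exact adj_root (by show (i:ℕ) ≠ (i:ℕ) - 1; omega) h0 h0
      · exact adj_branch h1 0
      · exact adj_path rfl
      · exact (adj_path (by show (j:ℕ) - 1 + 1 = (j:ℕ); omega)).symm
    | inr l =>
      fin_cases l
      · simp only [SC, Set.mem_setOf_eq] at hv
        have hine : (i : ℕ) ≠ n - 1 := fun h => hv.2 ⟨h, rfl⟩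
        simpa [fC, hine] using (adj_branch (i := i) (j := ⟨p - 1, by omega⟩) rfl 0).symm
      · simp [SC] at hv
  obtain ⟨M, hM, hverts⟩ := exists_matching_of_pairing (Ktilde n p) (SC n p)
    (fC n p hp0 hpe hno) hmem hinv hadj
  exact ⟨M, hM, by rw [hverts, ncard_SC (by omega) hp0]⟩

end KtildeAux

/-- For all positive integers `n` and `p`, the deficiency of `K̃ₙᵖ` equals `n` if
`n(p+1)` is even, and equals `n + 1` otherwise. -/
theorem deficiency_Ktilde (n p : ℕ) (hn : 1 ≤ n) (hp : 1 ≤ p) :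
    deficiency (Ktilde n p) = if Even (n * (p + 1)) then n else n + 1 := by
  classical
  have hring : n * (p + 2) = n * (p + 1) + n := by ring
  have h1 : 1 ≤ n * (p + 1) := Nat.one_le_iff_ne_zero.mpr (by positivity)
  have hcond : Even (n * (p + 1)) ↔ (n % 2 = 0 ∨ p % 2 = 1) := by
    rw [Nat.even_mul, Nat.even_iff, Nat.even_iff]; omega
  rcases Nat.even_or_odd p with hpe | hpo
  · rw [Nat.even_iff] at hpe
    rcases Nat.even_or_odd n with hne | hno
    · rw [Nat.even_iff] at hne
      rw [if_pos (hcond.mpr (Or.inl hne))]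
      unfold deficiency
      rw [KtildeAux.sSup_matching_eq (KtildeAux.matchB hpe (by omega) hne)
        (fun M hM => by have := KtildeAux.matching_card_le (by omega) hM; omega),
        KtildeAux.card_Vt]
      omega
    · rw [Nat.odd_iff] at hno
      rw [if_neg (by rw [hcond]; omega)]
      unfold deficiency
      have hub : ∀ M : (Ktilde n p).Subgraph, M.IsMatching →
          M.verts.ncard ≤ n * (p + 1) - 1 := by
        intro M hM
        have h2 := KtildeAux.matching_card_le (by omega : 0 < p) hM
        have h3 := KtildeAux.ncard_even hM
        rw [Nat.even_iff] at h3
        have h4 : (n * (p + 1)) % 2 = 1 := by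
          rw [Nat.mul_mod, hno]
          omega
        omega
      rw [KtildeAux.sSup_matching_eq (KtildeAux.matchC hpe (by omega) hno) hub,
        KtildeAux.card_Vt]
      omega
  · rw [Nat.odd_iff] at hpo
    rw [if_pos (hcond.mpr (Or.inr hpo))]
    unfold deficiency
    rw [KtildeAux.sSup_matching_eq (KtildeAux.matchA hpo)
      (fun M hM => by have := KtildeAux.matching_card_le (by omega) hM; omega),
      KtildeAux.card_Vt]
    omega
end

section
/- For every positive integer s and every odd positive integer t, the deficiency of H_{s,t}^1 equals s + 1. -/
open SimpleGraph

lemma H1aux_even_of_fpf {n : ℕ} (p : Fin n → Fin n) (hinv : ∀ x, p (p x) = x)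
    (hfp : ∀ x, p x ≠ x) : n % 2 = 0 := by
  classical
  have hinj : Function.Injective p := fun a b h => by rw [← hinv a, h, hinv]
  set A : Finset (Fin n) := Finset.univ.filter (fun x => x < p x) with hA
  have hU : (Finset.univ : Finset (Fin n)) = A ∪ A.image p := by
    ext x
    simp only [Finset.mem_union, Finset.mem_image, hA, Finset.mem_filter, Finset.mem_univ,
      true_and, true_iff]
    rcases lt_trichotomy x (p x) with h | h | h
    · exact Or.inl h
    · exact absurd h.symm (hfp x)
    · exact Or.inr ⟨p x, by rw [hinv x]; exact h, hinv x⟩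
  have hdisj : Disjoint A (A.image p) := by
    rw [Finset.disjoint_left]
    rintro x hx hx'
    simp only [hA, Finset.mem_image, Finset.mem_filter, Finset.mem_univ, true_and] at hx hx'
    obtain ⟨a, ha, rfl⟩ := hx'
    rw [hinv a] at hx
    exact absurd (hx.trans ha) (lt_irrefl _)
  have hcard := congrArg Finset.card hU
  rw [Finset.card_union_of_disjoint hdisj, Finset.card_image_of_injective _ hinj,
    Finset.card_univ, Fintype.card_fin] at hcard
  omega

def H1MAdj (s t : ℕ) :
    ((Fin (s+1) × Fin t) ⊕ (Fin s × Fin 2)) → ((Fin (s+1) × Fin t) ⊕ (Fin s × Fin 2)) → Prop :=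
  fun a b =>
  match a, b with
  | Sum.inl (i, j), Sum.inl (i', j') =>
      i = i' ∧ (((j : ℕ) % 2 = 0 ∧ (j : ℕ) + 1 = (j' : ℕ)) ∨
        ((j' : ℕ) % 2 = 0 ∧ (j' : ℕ) + 1 = (j : ℕ)))
  | Sum.inr (k, l), Sum.inr (k', l') => k = k' ∧ l ≠ l'
  | _, _ => False

def H1Mstar (s t : ℕ) (ht : t % 2 = 1) : (H1graph s t).Subgraph where
  verts := {x | match x with | Sum.inl (_, j) => (j : ℕ) ≠ t - 1 | Sum.inr _ => True}
  Adj := H1MAdj s t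
  adj_sub := by
    rintro (⟨i, j⟩ | ⟨k, l⟩) (⟨i', j'⟩ | ⟨k', l'⟩) h <;>
      simp only [H1MAdj] at h <;> try exact h.elim
    · obtain ⟨rfl, h⟩ := h
      rw [H1graph, fromRel_adj]
      refine ⟨?_, ?_⟩
      · intro hc
        have : j = j' := by
          have := congrArg (fun x => match x with | Sum.inl (_, j) => (j:ℕ) | _ => 0) hc
          simp at this
          exact Fin.ext this
        subst this
        omega
      · rcases h with ⟨_, h⟩ | ⟨_, h⟩
        · exact Or.inl ⟨rfl, h⟩
        · exact Or.inr ⟨rfl, h⟩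
    · obtain ⟨rfl, h⟩ := h
      rw [H1graph, fromRel_adj]
      refine ⟨fun hc => h ?_, Or.inl ⟨rfl, h⟩⟩
      injection hc with h'
      exact congrArg Prod.snd h'
  edge_vert := by
    rintro (⟨i, j⟩ | ⟨k, l⟩) (⟨i', j'⟩ | ⟨k', l'⟩) h <;>
      simp only [H1MAdj] at h <;> try exact h.elim
    · obtain ⟨rfl, h⟩ := h
      simp only [Set.mem_setOf_eq]
      have hj' := j'.isLt
      have hj := j.isLt
      rcases h with ⟨h1, h2⟩ | ⟨h1, h2⟩ <;> omega
    · trivial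
  symm := by
    constructor
    rintro (⟨i, j⟩ | ⟨k, l⟩) (⟨i', j'⟩ | ⟨k', l'⟩) h <;>
      simp only [H1MAdj] at h ⊢ <;> try exact h.elim
    · exact ⟨h.1.symm, h.2.symm⟩
    · exact ⟨h.1.symm, h.2.symm⟩

lemma H1Mstar_isMatching (s t : ℕ) (ht : t % 2 = 1) : (H1Mstar s t ht).IsMatching := by
  rintro (⟨i, j⟩ | ⟨k, l⟩) hv
  · have hv' : (j : ℕ) ≠ t - 1 := hv
    have hj := j.isLt
    by_cases hpar : (j : ℕ) % 2 = 0
    · refine ⟨Sum.inl (i, ⟨(j : ℕ) + 1, by omega⟩), ⟨rfl, Or.inl ⟨hpar, rfl⟩⟩, ?_⟩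
      rintro (⟨i', j'⟩ | ⟨k', l'⟩) h <;> simp only [H1Mstar, H1MAdj] at h
      obtain ⟨rfl, h⟩ := h
      rcases h with ⟨h1, h2⟩ | ⟨h1, h2⟩
      · simp only [Sum.inl.injEq, Prod.mk.injEq, Fin.ext_iff]
        exact ⟨trivial, h2.symm⟩
      · omega
    · refine ⟨Sum.inl (i, ⟨(j : ℕ) - 1, by omega⟩), ⟨rfl, Or.inr ⟨?_, ?_⟩⟩, ?_⟩
      · show ((j : ℕ) - 1) % 2 = 0
        omega
      · show ((j : ℕ) - 1) + 1 = (j : ℕ)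
        omega
      · rintro (⟨i', j'⟩ | ⟨k', l'⟩) h <;> simp only [H1Mstar, H1MAdj] at h
        obtain ⟨rfl, h⟩ := h
        rcases h with ⟨h1, h2⟩ | ⟨h1, h2⟩
        · omega
        · simp only [Sum.inl.injEq, Prod.mk.injEq, Fin.ext_iff]
          exact ⟨trivial, by omega⟩
  · have hl := l.isLt
    refine ⟨Sum.inr (k, ⟨1 - (l : ℕ), by omega⟩), ⟨rfl, ?_⟩, ?_⟩
    · intro hc
      rw [Fin.ext_iff] at hc
      simp only [] at hc
      omega
    · rintro (⟨i', j'⟩ | ⟨k', l'⟩) h <;> simp only [H1Mstar, H1MAdj] at h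
      obtain ⟨rfl, h⟩ := h
      simp only [Sum.inr.injEq, Prod.mk.injEq, Fin.ext_iff]
      rw [Ne, Fin.ext_iff] at h
      have := l'.isLt
      exact ⟨trivial, by omega⟩

lemma H1Mstar_ncard (s t : ℕ) (ht : t % 2 = 1) :
    (H1Mstar s t ht).verts.ncard = (s + 1) * (t - 1) + 2 * s := by
  classical
  have hcompl : (H1Mstar s t ht).vertsᶜ =
      Set.range (fun i : Fin (s+1) => (Sum.inl (i, ⟨t - 1, by omega⟩) :
        (Fin (s+1) × Fin t) ⊕ (Fin s × Fin 2))) := by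
    ext x
    rcases x with ⟨i, j⟩ | ⟨k, l⟩
    · simp only [Set.mem_compl_iff, Set.mem_range, H1Mstar, Set.mem_setOf_eq, not_not]
      constructor
      · intro h
        exact ⟨i, by simp [Prod.ext_iff, Fin.ext_iff, h]⟩
      · rintro ⟨i', hi⟩
        simp only [Sum.inl.injEq, Prod.mk.injEq, Fin.ext_iff] at hi
        omega
    · simp only [Set.mem_compl_iff, Set.mem_range, H1Mstar, Set.mem_setOf_eq, not_true]
      constructor
      · intro h
        exact h.elim
      · rintro ⟨i', hi⟩
        exact absurd hi (by simp)
  have hinj : Function.Injective (fun i : Fin (s+1) => (Sum.inl (i, ⟨t - 1, by omega⟩) :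
      (Fin (s+1) × Fin t) ⊕ (Fin s × Fin 2))) := by
    intro a b hab
    injection hab with h'
    exact congrArg Prod.fst h'
  have h1 : (H1Mstar s t ht).vertsᶜ.ncard = s + 1 := by
    rw [hcompl, ← Nat.card_coe_set_eq, Nat.card_range_of_injective hinj]
    simp
  have h2 := Set.ncard_add_ncard_compl (H1Mstar s t ht).verts
  rw [h1] at h2
  have h3 : Nat.card ((Fin (s+1) × Fin t) ⊕ (Fin s × Fin 2)) = (s+1) * t + 2 * s := by
    simp [Nat.card_eq_fintype_card, mul_comm]
  rw [h3] at h2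
  have h4 : (s+1) * t = (s+1) * (t-1) + (s+1) := by
    obtain ⟨n, rfl⟩ : ∃ n, t = n + 1 := ⟨t - 1, by omega⟩
    simp [Nat.mul_succ]
  omega

def H1comp (s t : ℕ) : (Fin (s+1) ⊕ Fin s) →
    ((Fin (s+1) × Fin t) ⊕ (Fin s × Fin 2)) → Prop :=
  fun c x =>
  match c, x with
  | Sum.inl i, Sum.inl (i', _) => i = i'
  | Sum.inr k, Sum.inr (k', l) => k = k' ∧ l = 1
  | _, _ => False

lemma H1comp_unique (s t : ℕ) (c c' : Fin (s+1) ⊕ Fin s)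
    (x : (Fin (s+1) × Fin t) ⊕ (Fin s × Fin 2))
    (h : H1comp s t c x) (h' : H1comp s t c' x) : c = c' := by
  rcases c with i | k <;> rcases c' with i' | k' <;> rcases x with ⟨a, b⟩ | ⟨a, b⟩ <;>
    simp only [H1comp] at h h' <;> try (exact h.elim); try (exact h'.elim)
  · rw [h, h']
  · rw [h.1, h'.1]

lemma H1_matching_le (s t : ℕ) (ht : t % 2 = 1) (M : (H1graph s t).Subgraph)
    (hM : M.IsMatching) : M.verts.ncard ≤ (s + 1) * (t - 1) + 2 * s := by
  classical
  -- key existence per component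
  have key : ∀ c : Fin (s+1) ⊕ Fin s, ∃ y : (↥(M.vertsᶜ)) ⊕ Fin s,
      (match y with
       | Sum.inl u => H1comp s t c u.val
       | Sum.inr k => ∃ x, H1comp s t c x ∧ M.Adj x (Sum.inr (k, 0))) := by
    rintro (i | k)
    · by_cases h1 : ∃ j, (Sum.inl (i, j) : (Fin (s+1) × Fin t) ⊕ (Fin s × Fin 2)) ∉ M.verts
      · obtain ⟨j, hj⟩ := h1
        exact ⟨Sum.inl ⟨Sum.inl (i, j), hj⟩, rfl⟩
      · by_cases h2 : ∃ j k, M.Adj (Sum.inl (i, j)) (Sum.inr (k, 0))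
        · obtain ⟨j, k, hjk⟩ := h2
          exact ⟨Sum.inr k, Sum.inl (i, j), rfl, hjk⟩
        · exfalso
          push_neg at h1 h2
          have hp : ∀ j : Fin t, ∃ j', M.Adj (Sum.inl (i, j)) (Sum.inl (i, j')) := by
            intro j
            obtain ⟨y, hy, -⟩ := hM (h1 j)
            have hG := M.adj_sub hy
            rcases y with ⟨i', j'⟩ | ⟨k, l⟩
            · rw [H1graph, fromRel_adj] at hG
              obtain ⟨-, hr | hr⟩ := hG
              · obtain ⟨rfl, -⟩ := hr
                exact ⟨j', hy⟩
              · obtain ⟨rfl, -⟩ := hr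
                exact ⟨j', hy⟩
            · rw [H1graph, fromRel_adj] at hG
              obtain ⟨-, hr | hr⟩ := hG
              · obtain ⟨hl, -⟩ := hr
                have : l = 0 := Fin.ext hl
                subst this
                exact absurd hy (h2 j k)
              · exact hr.elim
          choose p hp' using hp
          have hfp : ∀ j, p j ≠ j := by
            intro j hc
            have := (M.adj_sub (hp' j)).ne
            rw [hc] at this
            exact this rfl
          have hinv : ∀ j, p (p j) = j := by
            intro j
            obtain ⟨w, hw, huniq⟩ := hM (h1 (p j))
            have e1 := huniq _ (hp' (p j))
            have e2 := huniq _ (M.adj_symm (hp' j))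
            rw [← e2] at e1
            simp only [Sum.inl.injEq, Prod.mk.injEq] at e1
            exact e1.2
          have := H1aux_even_of_fpf p hinv hfp
          omega
    · by_cases hx : (Sum.inr (k, 1) : (Fin (s+1) × Fin t) ⊕ (Fin s × Fin 2)) ∈ M.verts
      · obtain ⟨y, hy, -⟩ := hM hx
        have hG := M.adj_sub hy
        rcases y with ⟨i', j'⟩ | ⟨k', l'⟩
        · rw [H1graph, fromRel_adj] at hG
          obtain ⟨-, hr | hr⟩ := hG
          · exact hr.elim
          · obtain ⟨hl, -⟩ := hr
            simp at hl
        · rw [H1graph, fromRel_adj] at hG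
          have hkl : k = k' ∧ l' ≠ 1 := by
            obtain ⟨-, hr | hr⟩ := hG
            · exact ⟨hr.1, fun hc => hr.2 hc.symm⟩
            · exact ⟨hr.1.symm, hr.2⟩
          obtain ⟨hkk, hl⟩ := hkl
          subst hkk
          have hl0 : l' = 0 := by
            have := l'.isLt
            rw [Ne, Fin.ext_iff] at hl
            exact Fin.ext (by omega)
          subst hl0
          exact ⟨Sum.inr k, Sum.inr (k, 1), ⟨rfl, rfl⟩, hy⟩
      · exact ⟨Sum.inl ⟨Sum.inr (k, 1), hx⟩, ⟨rfl, rfl⟩⟩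
  choose Φ hΦ using key
  have hΦinj : Function.Injective Φ := by
    intro c c' h
    have q := hΦ c
    have q' := hΦ c'
    rw [h] at q
    rcases hy : Φ c' with u | k
    · rw [hy] at q q'
      exact H1comp_unique s t c c' u.val q q'
    · rw [hy] at q q'
      obtain ⟨x, hc, hadj⟩ := q
      obtain ⟨x', hc', hadj'⟩ := q'
      obtain ⟨w, -, huniq⟩ := hM (M.edge_vert (M.adj_symm hadj))
      have e1 := huniq _ (M.adj_symm hadj)
      have e2 := huniq _ (M.adj_symm hadj')
      rw [← e2] at e1
      rw [← e1] at hc'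
      exact H1comp_unique s t c c' x hc hc'
  have hcard := Fintype.card_le_of_injective Φ hΦinj
  simp only [Fintype.card_sum, Fintype.card_fin] at hcard
  have hc1 : Fintype.card (↥(M.vertsᶜ)) = M.vertsᶜ.ncard := by
    rw [← Nat.card_eq_fintype_card, Nat.card_coe_set_eq]
  rw [hc1] at hcard
  have h2 := Set.ncard_add_ncard_compl M.verts
  have h3 : Nat.card ((Fin (s+1) × Fin t) ⊕ (Fin s × Fin 2)) = (s+1) * t + 2 * s := by
    simp [Nat.card_eq_fintype_card, mul_comm]
  rw [h3] at h2
  have h4 : (s+1) * t = (s+1) * (t-1) + (s+1) := by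
    obtain ⟨n, rfl⟩ : ∃ n, t = n + 1 := ⟨t - 1, by omega⟩
    simp [Nat.mul_succ]
  omega


/-- For every positive integer `s` and every odd (positive) integer `t`, the deficiency
of `H¹_{s,t}` equals `s + 1`. -/
theorem deficiency_H1 (s t : ℕ) (hs : 1 ≤ s) (ht : Odd t) :
    deficiency (H1graph s t) = s + 1 := by
  have ht' : t % 2 = 1 := Nat.odd_iff.mp ht
  have hmem : (s+1)*(t-1)+2*s ∈ {k : ℕ | ∃ M : (H1graph s t).Subgraph,
      M.IsMatching ∧ M.verts.ncard = k} :=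
    ⟨H1Mstar s t ht', H1Mstar_isMatching s t ht', H1Mstar_ncard s t ht'⟩
  have hub : ∀ k ∈ {k : ℕ | ∃ M : (H1graph s t).Subgraph,
      M.IsMatching ∧ M.verts.ncard = k}, k ≤ (s+1)*(t-1)+2*s := by
    rintro k ⟨M, hM, rfl⟩
    exact H1_matching_le s t ht' M hM
  have hsup : sSup {k : ℕ | ∃ M : (H1graph s t).Subgraph,
      M.IsMatching ∧ M.verts.ncard = k} = (s+1)*(t-1)+2*s :=
    le_antisymm (csSup_le ⟨_, hmem⟩ hub) (le_csSup ⟨_, fun k hk => hub k hk⟩ hmem)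
  unfold deficiency
  rw [hsup]
  have h3 : Fintype.card ((Fin (s+1) × Fin t) ⊕ (Fin s × Fin 2)) = (s+1)*t + 2*s := by
    simp [mul_comm]
  rw [h3]
  have h4 : (s+1) * t = (s+1) * (t-1) + (s+1) := by
    obtain ⟨n, rfl⟩ : ∃ n, t = n + 1 := ⟨t - 1, by omega⟩
    simp [Nat.mul_succ]
  omega
end
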